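/- arXiv:0907.0942 — 7 statements merged into one kernel-verified Lean document; each statement's English description precedes it below -/
import Mathlib

section
/- Let L be a language over a finite alphabet Σ and let w be a finite word over Σ. Then w belongs to the center centre(L) := pref(adh(L)) (i.e., w is a prefix of some infinite word in the adherence of L) if and only if w is a prefix of infinitely many words of L, i.e., the left quotient w⁻¹L = { x ∈ Σ* : wx ∈ L } is infinite. -/
/-- The prefix of length `ℓ` of an infinite word `w : ℕ → A`. -/
def prefixOf {A : Type*} (w : ℕ → A) (ℓ : ℕ) : List A := List.ofFn (fun i : Fin ℓ => w i)

/-- The set of prefixes of words of a language `L`. -/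
def pref {A : Type*} (L : Set (List A)) : Set (List A) := {u | ∃ v ∈ L, u <+: v}

/-- The adherence of a language. -/
def adh {A : Type*} (L : Set (List A)) : Set (ℕ → A) :=
  {w | ∀ ℓ : ℕ, prefixOf w ℓ ∈ pref L}

/-- The center of a language: the finite prefixes of elements of the adherence. -/
def centre {A : Type*} (L : Set (List A)) : Set (List A) :=
  {u | ∃ w ∈ adh L, u = prefixOf w u.length}

namespace Stmt1Aux

variable {Γ : Type*}

/-- elements of L extending u, recorded as their suffix after w. -/
def T (L : Set (List Γ)) (w u : List Γ) : Set (List Γ) :=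
  {x | w ++ x ∈ L ∧ u <+: w ++ x}

lemma key [Fintype Γ] {L : Set (List Γ)} {w u : List Γ} (h : (T L w u).Infinite) :
    ∃ a : Γ, (T L w (u ++ [a])).Infinite := by
  by_contra hc
  push_neg at hc
  apply h
  have hsub : T L w u ⊆ {x | w ++ x = u} ∪ ⋃ a : Γ, T L w (u ++ [a]) := by
    rintro x ⟨hxL, t, ht⟩
    rcases t with _ | ⟨b, t''⟩
    · left; simp [← ht]
    · exact Or.inr (Set.mem_iUnion.2 ⟨b, hxL, t'', by simp [← ht]⟩)
  refine Set.Finite.subset (Set.Finite.union ?_ (Set.finite_iUnion hc)) hsub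
  apply Set.Subsingleton.finite
  intro x hx y hy
  exact List.append_cancel_left (hx.trans hy.symm)

noncomputable def chain [Nonempty Γ] (L : Set (List Γ)) (w : List Γ) : ℕ → List Γ
  | 0 => w
  | n + 1 =>
      chain L w n ++ [Classical.epsilon (fun a => (T L w (chain L w n ++ [a])).Infinite)]

lemma prefixOf_mono (v : ℕ → Γ) {a b : ℕ} (h : a ≤ b) : prefixOf v a <+: prefixOf v b := by
  have he : prefixOf v a = (prefixOf v b).take a := by
    apply List.ext_getElem
    · simp [prefixOf]; omega
    · intro i h1 h2
      simp [prefixOf]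
  rw [he]; exact List.take_prefix _ _

variable [Nonempty Γ] [Fintype Γ] {L : Set (List Γ)} {w : List Γ}

lemma chain_infinite (h : (T L w w).Infinite) (n : ℕ) : (T L w (chain L w n)).Infinite := by
  induction n with
  | zero => exact h
  | succ n ih => exact Classical.epsilon_spec (key ih)

omit [Fintype Γ] in
lemma chain_length (n : ℕ) : (chain L w n).length = w.length + n := by
  induction n with
  | zero => rfl
  | succ n ih => simp [chain, ih]; omega

omit [Fintype Γ] in
lemma chain_prefix {m n : ℕ} (h : m ≤ n) : chain L w m <+: chain L w n := by
  induction n with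
  | zero => simp_all
  | succ n ih =>
    rcases Nat.lt_or_ge m (n+1) with h' | h'
    · exact (ih (by omega)).trans (by simp [chain])
    · have : m = n + 1 := by omega
      subst this; rfl

noncomputable def limitWord (L : Set (List Γ)) (w : List Γ) : ℕ → Γ :=
  fun i => (chain L w (i + 1)).getD i (Classical.arbitrary Γ)

omit [Fintype Γ] in
lemma limitWord_eq {n i : ℕ} (h : i < n) :
    limitWord L w i = (chain L w n)[i]'(by rw [chain_length]; omega) := by
  have hp : chain L w (i+1) <+: chain L w n := chain_prefix h
  have hi : i < (chain L w (i+1)).length := by rw [chain_length]; omega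
  rw [limitWord, List.getD_eq_getElem _ _ hi]
  exact List.IsPrefix.getElem hp hi

omit [Fintype Γ] in
lemma prefixOf_limit (ℓ : ℕ) : prefixOf (limitWord L w) ℓ = (chain L w ℓ).take ℓ := by
  apply List.ext_getElem
  · simp [prefixOf, chain_length]
  · intro i h1 h2
    simp only [prefixOf, List.getElem_ofFn, List.getElem_take]
    exact limitWord_eq (by simpa [prefixOf] using h1)

end Stmt1Aux

open Stmt1Aux in
theorem stmt_1 {Γ : Type*} [Fintype Γ] (L : Set (List Γ)) (w : List Γ) :
    w ∈ centre L ↔ {x : List Γ | w ++ x ∈ L}.Infinite := by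
  constructor
  · rintro ⟨v, hv, hw⟩
    intro hfin
    obtain ⟨N, hN⟩ : ∃ N, ∀ x ∈ {x : List Γ | w ++ x ∈ L}, x.length ≤ N := by
      obtain ⟨N, hN⟩ := (hfin.image List.length).bddAbove
      exact ⟨N, fun x hx => hN (Set.mem_image_of_mem _ hx)⟩
    obtain ⟨y, hyL, hpy⟩ := hv (w.length + N + 1)
    obtain ⟨t, ht⟩ := hpy
    have hwp : w <+: y := by
      rw [hw]
      exact (prefixOf_mono v (by omega)).trans ⟨t, ht⟩
    obtain ⟨x, rfl⟩ := hwp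
    have hx : x ∈ {x : List Γ | w ++ x ∈ L} := hyL
    have hlen : w.length + N + 1 ≤ (w ++ x).length := by
      have := congrArg List.length ht
      simp [prefixOf] at this ⊢
      omega
    have := hN x hx
    simp at hlen
    omega
  · intro hS
    -- Γ is nonempty
    have hne : Nonempty Γ := by
      by_contra hc
      rw [not_nonempty_iff] at hc
      apply hS
      have : {x : List Γ | w ++ x ∈ L} ⊆ {[]} := by
        intro x _
        rcases x with _ | ⟨a, _⟩
        · rfl
        · exact (hc.false a).elim
      exact (Set.finite_singleton _).subset this
    have hT : (T L w w).Infinite := by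
      apply Set.Infinite.mono ?_ hS
      intro x hx
      exact ⟨hx, List.prefix_append w x⟩
    refine ⟨limitWord L w, ?_, ?_⟩
    · intro ℓ
      obtain ⟨x, hxL, hxp⟩ := (chain_infinite hT ℓ).nonempty
      refine ⟨w ++ x, hxL, ?_⟩
      rw [prefixOf_limit]
      exact (List.take_prefix ℓ _).trans hxp
    · rw [prefixOf_limit]
      have : w <+: chain L w w.length := chain_prefix (Nat.zero_le _)
      obtain ⟨t, ht⟩ := this
      rw [← ht, List.take_left]
end

section
/- Let L be a regular language over a finite alphabet Σ. The adherence adh(L) is uncountable if and only if every deterministic finite automaton A = (Q, q₀, Σ, δ, F) accepting L contains two distinct cycles based at a common state q that is both accessible and coaccessible; precisely: there exist a state q with δ(q₀, x) = q for some word x and δ(q, y) ∈ F for some word y, and words u, v with δ(q, u) = q, δ(q, v) = q and uv ≠ vu. -/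
/-- Transition function of a deterministic automaton extended to words. -/
def deltaStar {Q A : Type*} (δ : Q → A → Q) (q : Q) (w : List A) : Q := w.foldl δ q

private lemma deltaStar_append' {Q A : Type*} (δ : Q → A → Q) (q : Q) (a b : List A) :
    deltaStar δ q (a ++ b) = deltaStar δ (deltaStar δ q a) b :=
  List.foldl_append

private lemma prefixOf_split {A : Type*} (w : ℕ → A) {a b : ℕ} (h : a ≤ b) :
    prefixOf w b = prefixOf w a ++ List.ofFn (fun i : Fin (b - a) => w (a + i)) := by
  apply List.ext_getElem
  · simp [prefixOf]; omega
  · intro i h1 h2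
    simp only [prefixOf]
    rw [List.getElem_ofFn]
    rcases lt_or_ge i a with hi | hi
    · rw [List.getElem_append_left (by simpa [prefixOf] using hi)]
      simp [prefixOf]
    · rw [List.getElem_append_right (by simpa [prefixOf] using hi)]
      rw [List.getElem_ofFn]
      simp only [prefixOf, List.length_ofFn]
      congr 1
      omega

/-- Countability of the adherence when all loops at accessible coaccessible states commute. -/
private lemma adh_countable_aux {Γ : Type*} [Fintype Γ] (L : Set (List Γ))
    {Q : Type} [Fintype Q] (q0 : Q) (δ : Q → Γ → Q) (F : Set Q)
    (hL : L = {w | deltaStar δ q0 w ∈ F})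
    (h : ∀ q : Q, (∃ x, deltaStar δ q0 x = q) → (∃ y, deltaStar δ q y ∈ F) →
      ∀ u v : List Γ, deltaStar δ q u = q → deltaStar δ q v = q → u ++ v = v ++ u) :
    (adh L).Countable := by
  classical
  obtain ⟨e, he⟩ := exists_injective_nat (List Γ)
  set S : ℕ → ℕ → Set (ℕ → Γ) := fun N p => {w | ∀ i, w (N + i + (p+1)) = w (N + i)} with hS_def
  have hS : ∀ N p, (S N p).Countable := by
    intro N p
    rw [Set.countable_iff_exists_injOn]
    refine ⟨fun w => e (prefixOf w (N + p + 1)), ?_⟩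
    intro w hw w' hw' hpre
    have hpre2 : prefixOf w (N+p+1) = prefixOf w' (N+p+1) := he hpre
    have hlt : ∀ i (_ : i < N + p + 1), w i = w' i := by
      intro i hi
      have h3 := List.ofFn_inj.1 hpre2
      exact congrFun h3 ⟨i, hi⟩
    funext i
    induction i using Nat.strong_induction_on with
    | _ i IH =>
      rcases lt_or_ge i (N + p + 1) with hi | hi
      · exact hlt i hi
      · have hji : i - (p+1) < i := by omega
        have key : ∀ z : ℕ → Γ, z ∈ S N p → z i = z (i - (p+1)) := by
          intro z hz
          have h4 := hz (i - (p+1) - N)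
          have e1 : N + (i - (p+1) - N) = i - (p+1) := by omega
          have e2 : N + (i - (p+1) - N) + (p+1) = i := by omega
          have e2' : i - (p+1) + (p+1) = i := by omega
          rw [e1, e2'] at h4
          exact h4
        rw [key w hw, key w' hw', IH _ hji]
  have hsub : adh L ⊆ ⋃ (N : ℕ) (p : ℕ), S N p := by
    intro w hw
    set ρ : ℕ → Q := fun n => deltaStar δ q0 (prefixOf w n) with hρ
    obtain ⟨q, hq⟩ := Finite.exists_infinite_fiber ρ
    have hinf : (ρ ⁻¹' {q}).Infinite := Set.infinite_coe_iff.1 hq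
    obtain ⟨n0, hn0⟩ := hinf.nonempty
    obtain ⟨n1, hn1, hlt01⟩ := hinf.exists_gt n0
    have hn0' : deltaStar δ q0 (prefixOf w n0) = q := hn0
    have hn1' : deltaStar δ q0 (prefixOf w n1) = q := hn1
    have hacc : ∃ x, deltaStar δ q0 x = q := ⟨prefixOf w n0, hn0'⟩
    have hcoacc : ∃ y, deltaStar δ q y ∈ F := by
      obtain ⟨v, hvL, r, hr⟩ := hw n0
      refine ⟨r, ?_⟩
      have hvF : deltaStar δ q0 v ∈ F := by rw [hL] at hvL; exact hvL
      rw [← hr, deltaStar_append', hn0'] at hvF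
      exact hvF
    have hcomm := h q hacc hcoacc
    refine Set.mem_iUnion.2 ⟨n0, Set.mem_iUnion.2 ⟨n1 - n0 - 1, ?_⟩⟩
    intro i
    obtain ⟨nk, hnk, hltk⟩ := hinf.exists_gt (n0 + i + (n1 - n0))
    have hnk' : deltaStar δ q0 (prefixOf w nk) = q := hnk
    set s : List Γ := List.ofFn (fun j : Fin (n1 - n0) => w (n0 + j)) with hs_def
    set t : List Γ := List.ofFn (fun j : Fin (nk - n0) => w (n0 + j)) with ht_def
    have hs_loop : deltaStar δ q s = q := by
      have h2 : deltaStar δ q0 (prefixOf w n1) = deltaStar δ q s := by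
        rw [prefixOf_split w hlt01.le, deltaStar_append', hn0']
      rw [← h2, hn1']
    have hn0k : n0 ≤ nk := by omega
    have ht_loop : deltaStar δ q t = q := by
      have h2 : deltaStar δ q0 (prefixOf w nk) = deltaStar δ q t := by
        rw [prefixOf_split w hn0k, deltaStar_append', hn0']
      rw [← h2, hnk']
    have heq := hcomm s t hs_loop ht_loop
    have hlen_s : s.length = n1 - n0 := List.length_ofFn
    have hlen_t : t.length = nk - n0 := List.length_ofFn
    have hidx : (n1 - n0) + i < (s ++ t).length := by
      rw [List.length_append, hlen_s, hlen_t]; omega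
    have hget := List.getElem_of_eq heq hidx
    rw [List.getElem_append_right (by rw [hlen_s]; omega : s.length ≤ (n1 - n0) + i)] at hget
    rw [List.getElem_append_left (by rw [hlen_t]; omega :
        (n1 - n0) + i < t.length)] at hget
    simp only [hs_def, ht_def, List.getElem_ofFn, List.length_ofFn, Fin.val_mk] at hget
    have e3 : n0 + (n1 - n0 + i - (n1 - n0)) = n0 + i := by omega
    rw [e3] at hget
    have e4 : n0 + i + (n1 - n0 - 1 + 1) = n0 + (n1 - n0 + i) := by omega
    show w (n0 + i + (n1 - n0 - 1 + 1)) = w (n0 + i)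
    rw [e4]
    exact hget.symm
  exact Set.Countable.mono hsub
    (Set.countable_iUnion (fun N => Set.countable_iUnion (fun p => hS N p)))

private def Bword {A : Type*} (x : List A) (c : Bool → List A) (s : ℕ → Bool) : ℕ → List A
  | 0 => x
  | k+1 => Bword x c s k ++ c (s k)

private lemma adh_uncountable_aux {Γ : Type*} (L : Set (List Γ))
    {Q : Type*} (q0 : Q) (δ : Q → Γ → Q) (F : Set Q)
    (hL : L = {w | deltaStar δ q0 w ∈ F})
    (x : List Γ) (q : Q) (hx : deltaStar δ q0 x = q)
    (y : List Γ) (hy : deltaStar δ q y ∈ F)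
    (u v : List Γ) (hu : deltaStar δ q u = q) (hv : deltaStar δ q v = q)
    (hne : u ++ v ≠ v ++ u) : ¬ (adh L).Countable := by
  classical
  obtain ⟨m, hm_def⟩ : ∃ m : ℕ, m = u.length + v.length := ⟨_, rfl⟩
  have hm : 0 < m := by
    rcases Nat.eq_zero_or_pos m with h0 | h0
    · exfalso
      have hu0 : u = [] := List.eq_nil_of_length_eq_zero (by omega)
      have hv0 : v = [] := List.eq_nil_of_length_eq_zero (by omega)
      exact hne (by rw [hu0, hv0])
    · exact h0
  have ha_loop : deltaStar δ q (u ++ v) = q := by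
    rw [deltaStar_append', hu, hv]
  have hb_loop : deltaStar δ q (v ++ u) = q := by
    rw [deltaStar_append', hv, hu]
  have hane : u ++ v ≠ [] := by
    intro h0
    have := congrArg List.length h0
    rw [List.length_append, List.length_nil] at this
    omega
  haveI : Inhabited Γ := ⟨(u ++ v).head hane⟩
  obtain ⟨c, hc_def⟩ : ∃ c : Bool → List Γ,
      c = fun t => if t then u ++ v else v ++ u := ⟨_, rfl⟩
  have hcT : c true = u ++ v := by simp [hc_def]
  have hcF : c false = v ++ u := by simp [hc_def]
  have hc_len : ∀ t, (c t).length = m := by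
    intro t
    cases t
    · rw [hcF, List.length_append]; omega
    · rw [hcT, List.length_append]; omega
  have hc_loop : ∀ t, deltaStar δ q (c t) = q := by
    intro t; cases t
    · rw [hcF]; exact hb_loop
    · rw [hcT]; exact ha_loop
  have hc_inj : ∀ t t', c t = c t' → t = t' := by
    intro t t' h0
    cases t <;> cases t'
    · rfl
    · rw [hcT, hcF] at h0; exact absurd h0.symm hne
    · rw [hcT, hcF] at h0; exact absurd h0 hne
    · rfl
  -- basic facts about Bword
  have len_B : ∀ (s : ℕ → Bool) (k : ℕ), (Bword x c s k).length = x.length + k * m := by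
    intro s k
    induction k with
    | zero => simp [Bword]
    | succ k ih =>
      rw [Bword, List.length_append, ih, hc_len, Nat.succ_mul]
      ring
  have loop_B : ∀ (s : ℕ → Bool) (k : ℕ), deltaStar δ q0 (Bword x c s k) = q := by
    intro s k
    induction k with
    | zero => simpa [Bword] using hx
    | succ k ih => rw [Bword, deltaStar_append', ih, hc_loop]
  have prefix_B : ∀ (s : ℕ → Bool) {k k' : ℕ}, k ≤ k' → Bword x c s k <+: Bword x c s k' := by
    intro s k k' hkk
    induction k', hkk using Nat.le_induction with
    | base => exact List.prefix_refl _
    | succ k' _ ih => exact ih.trans (List.prefix_append _ _)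
  set f : (ℕ → Bool) → (ℕ → Γ) := fun s i => (Bword x c s (i+1)).getD i default with hf_def
  have hBlt : ∀ (s : ℕ → Bool) (i : ℕ), i < (Bword x c s (i+1)).length := by
    intro s i
    rw [len_B]
    have h1 : i + 1 ≤ (i+1) * m := Nat.le_mul_of_pos_right _ hm
    omega
  have stable : ∀ (s : ℕ → Bool) (k i : ℕ) (hik : i < (Bword x c s k).length),
      (Bword x c s k)[i] = f s i := by
    intro s k i hik
    have h2 := hBlt s i
    rw [hf_def]
    simp only
    rw [List.getD_eq_getElem _ _ h2]
    rcases le_total k (i+1) with hk | hk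
    · exact (prefix_B s hk).getElem hik
    · exact ((prefix_B s hk).getElem h2).symm
  have mem_adh : ∀ s : ℕ → Bool, f s ∈ adh L := by
    intro s ℓ
    have hlen : ℓ ≤ (Bword x c s ℓ).length := by
      rw [len_B]
      have h1 : ℓ ≤ ℓ * m := Nat.le_mul_of_pos_right _ hm
      omega
    have hpre : prefixOf (f s) ℓ = (Bword x c s ℓ).take ℓ := by
      apply List.ext_getElem
      · simp [prefixOf, List.length_take]; omega
      · intro i h1 h2
        rw [List.getElem_take]
        simp only [prefixOf]
        rw [List.getElem_ofFn]
        have h1' : i < ℓ := by simpa [prefixOf] using h1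
        exact (stable s ℓ i (lt_of_lt_of_le h1' hlen)).symm
    refine ⟨Bword x c s ℓ ++ y, ?_, ?_⟩
    · rw [hL]
      show deltaStar δ q0 (Bword x c s ℓ ++ y) ∈ F
      rw [deltaStar_append', loop_B]
      exact hy
    · rw [hpre]
      exact (List.take_prefix _ _).trans (List.prefix_append _ _)
  have hinj : Function.Injective f := by
    intro s t hst
    funext k
    apply hc_inj
    apply List.ext_getElem
    · rw [hc_len, hc_len]
    · intro j h1 h2
      have hjm : j < m := by rwa [hc_len] at h1
      have hlenk : (Bword x c s k).length = x.length + k * m := len_B s k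
      have hlenk' : (Bword x c t k).length = x.length + k * m := len_B t k
      have hidx : x.length + k * m + j < (Bword x c s (k+1)).length := by
        rw [len_B, Nat.succ_mul]; omega
      have hidx' : x.length + k * m + j < (Bword x c t (k+1)).length := by
        rw [len_B, Nat.succ_mul]; omega
      have e1 : (Bword x c s (k+1))[x.length + k * m + j]'hidx = (c (s k))[j]'h1 := by
        show (Bword x c s k ++ c (s k))[x.length + k * m + j]'(by rw [List.length_append, hlenk, hc_len]; omega) = _
        rw [List.getElem_append_right (by rw [hlenk]; omega : (Bword x c s k).length ≤ x.length + k * m + j)]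
        congr 1
        rw [hlenk]
        omega
      have e2 : (Bword x c t (k+1))[x.length + k * m + j]'hidx' = (c (t k))[j]'h2 := by
        show (Bword x c t k ++ c (t k))[x.length + k * m + j]'(by rw [List.length_append, hlenk', hc_len]; omega) = _
        rw [List.getElem_append_right (by rw [hlenk']; omega : (Bword x c t k).length ≤ x.length + k * m + j)]
        congr 1
        rw [hlenk']
        omega
      rw [← e1, ← e2, stable s (k+1) _ hidx, stable t (k+1) _ hidx', hst]
  intro hcount
  have hpreim : f ⁻¹' (adh L) = Set.univ := Set.eq_univ_of_forall (fun s => mem_adh s)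
  have huniv : (Set.univ : Set (ℕ → Bool)).Countable := by
    rw [← hpreim]
    exact hcount.preimage hinj
  have hcnt : Countable (ℕ → Bool) := Set.countable_univ_iff.1 huniv
  obtain ⟨g, hg⟩ := exists_injective_nat (ℕ → Bool)
  exact Function.cantor_injective (fun s : Set ℕ => g (fun n => decide (n ∈ s)))
    (fun s t h0 => by
      have h2 : (fun n => decide (n ∈ s)) = fun n => decide (n ∈ t) := hg h0
      ext n
      have := congrFun h2 n
      simpa using this)

theorem stmt_3 {Γ : Type*} [Fintype Γ] (L : Set (List Γ))
    (hreg : ∃ (n : ℕ) (q0 : Fin n) (δ : Fin n → Γ → Fin n) (F : Set (Fin n)),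
      L = {w | deltaStar δ q0 w ∈ F}) :
    ¬ (adh L).Countable ↔
      ∀ (Q : Type) [Fintype Q], ∀ (q0 : Q) (δ : Q → Γ → Q) (F : Set Q),
        L = {w | deltaStar δ q0 w ∈ F} →
        ∃ q : Q,
          (∃ x : List Γ, deltaStar δ q0 x = q) ∧
          (∃ y : List Γ, deltaStar δ q y ∈ F) ∧
          ∃ u v : List Γ, deltaStar δ q u = q ∧ deltaStar δ q v = q ∧ u ++ v ≠ v ++ u := by
  constructor
  · intro hC Q _ q0 δ F hL
    by_contra hcon
    push_neg at hcon
    exact hC (adh_countable_aux L q0 δ F hL hcon)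
  · intro H
    obtain ⟨n, q0, δ, F, hL⟩ := hreg
    obtain ⟨q, ⟨x, hx⟩, ⟨y, hy⟩, u, v, hu, hv, hne⟩ := H (Fin n) q0 δ F hL
    exact adh_uncountable_aux L q0 δ F hL x q hx y hy u v hu hv hne
end

section
/- Let L be a regular language over a finite alphabet Σ. The following assertions are equivalent: (1) the adherence adh(L) is uncountable; (2) L is exponential; (3) pref(L) is exponential. -/
/-- A language `M` is exponential if the number of its words of length `n`
is at least `c·θⁿ` for some `θ > 1`, `c > 0` and infinitely many `n`. -/
def Exponential {A : Type*} (M : Set (List A)) : Prop :=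
  ∃ θ : ℝ, 1 < θ ∧ ∃ c : ℝ, 0 < c ∧
    ∀ N : ℕ, ∃ n : ℕ, N ≤ n ∧ c * θ ^ n ≤ ({w ∈ M | w.length = n}.ncard : ℝ)

namespace Stmt5
set_option linter.unusedSectionVars false
set_option linter.unusedVariables false

variable {Γ : Type*} [Fintype Γ] {Q : Type*} [Fintype Q]

omit [Fintype Γ] [Fintype Q] in
lemma deltaStar_append (δ : Q → Γ → Q) (q : Q) (u v : List Γ) :
    deltaStar δ q (u ++ v) = deltaStar δ (deltaStar δ q u) v :=
  List.foldl_append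

/-- A state from which `F` is reachable. -/
def Live (δ : Q → Γ → Q) (F : Set Q) (q : Q) : Prop := ∃ s, deltaStar δ q s ∈ F

omit [Fintype Γ] [Fintype Q] in
lemma Live.extend {δ : Q → Γ → Q} {F : Set Q} {q : Q} (v : List Γ)
    (h : Live δ F (deltaStar δ q v)) : Live δ F q := by
  obtain ⟨s, hs⟩ := h
  exact ⟨v ++ s, by rw [deltaStar_append]; exact hs⟩

omit [Fintype Γ] [Fintype Q] in
lemma mem_pref_iff (δ : Q → Γ → Q) (q0 : Q) (F : Set Q) (u : List Γ) :
    u ∈ pref {w | deltaStar δ q0 w ∈ F} ↔ Live δ F (deltaStar δ q0 u) := by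
  constructor
  · rintro ⟨v, hv, t, rfl⟩
    exact ⟨t, by rw [← deltaStar_append]; exact hv⟩
  · rintro ⟨s, hs⟩
    exact ⟨u ++ s, by rw [Set.mem_setOf_eq, deltaStar_append]; exact hs, List.prefix_append u s⟩

lemma pref_prefix_closed {L : Set (List Γ)} {u t : List Γ} (h : u ∈ pref L) (ht : t <+: u) :
    t ∈ pref L := by
  obtain ⟨v, hv, hp⟩ := h
  exact ⟨v, hv, ht.trans hp⟩

lemma finite_sect (M : Set (List Γ)) (n : ℕ) : {w ∈ M | w.length = n}.Finite :=
  (List.finite_length_eq Γ n).subset (fun w hw => hw.2)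

lemma Exponential.mono {M M' : Set (List Γ)} (h : M ⊆ M') (hM : Exponential M) :
    Exponential M' := by
  obtain ⟨θ, hθ, c, hc, H⟩ := hM
  refine ⟨θ, hθ, c, hc, fun N => ?_⟩
  obtain ⟨n, hn, hle⟩ := H N
  refine ⟨n, hn, hle.trans ?_⟩
  have hsub : {w ∈ M | w.length = n} ⊆ {w ∈ M' | w.length = n} := fun w hw => ⟨h hw.1, hw.2⟩
  exact_mod_cast Set.ncard_le_ncard hsub (finite_sect M' n)

lemma live_short {δ : Q → Γ → Q} {F : Set Q} {q : Q} (h : Live δ F q) :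
    ∃ s : List Γ, s.length < Fintype.card Q ∧ deltaStar δ q s ∈ F := by
  obtain ⟨s, hs⟩ := h
  suffices H : ∀ k, ∀ s : List Γ, s.length = k → deltaStar δ q s ∈ F →
      ∃ t : List Γ, t.length < Fintype.card Q ∧ deltaStar δ q t ∈ F from
    H s.length s rfl hs
  intro k
  induction k using Nat.strong_induction_on with
  | _ k IH =>
    intro s hk hs
    subst hk
    by_cases hlt : s.length < Fintype.card Q
    · exact ⟨s, hlt, hs⟩
    · push_neg at hlt
      have key : ∀ i j : ℕ, i < j → j ≤ s.length →
          deltaStar δ q (s.take i) = deltaStar δ q (s.take j) →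
          ∃ t : List Γ, t.length < Fintype.card Q ∧ deltaStar δ q t ∈ F := by
        intro i j hij hjle heq
        have hlen : (s.take i ++ s.drop j).length < s.length := by
          simp only [List.length_append, List.length_take, List.length_drop]
          omega
        refine IH _ hlen _ rfl ?_
        have h1 : deltaStar δ q (s.take i ++ s.drop j) =
            deltaStar δ (deltaStar δ q (s.take j)) (s.drop j) := by
          rw [deltaStar_append, heq]
        rw [h1, ← deltaStar_append, List.take_append_drop]
        exact hs
      have hcard : Fintype.card Q < Fintype.card (Fin (s.length + 1)) := by
        simp only [Fintype.card_fin]; omega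
      obtain ⟨i, j, hij, hfij⟩ := Fintype.exists_ne_map_eq_of_card_lt
        (fun i : Fin (s.length + 1) => deltaStar δ q (s.take i)) hcard
      rcases lt_or_gt_of_ne (fun h => hij (Fin.ext h) : (i : ℕ) ≠ j) with hlt' | hlt'
      · exact key i j hlt' (Nat.lt_succ_iff.mp j.isLt) hfij
      · exact key j i hlt' (Nat.lt_succ_iff.mp i.isLt) hfij.symm

lemma exp_of_exp_pref [Nonempty Q] (δ : Q → Γ → Q) (q0 : Q) (F : Set Q)
    (h : Exponential (pref {w | deltaStar δ q0 w ∈ F})) :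
    Exponential {w | deltaStar δ q0 w ∈ F} := by
  classical
  set L : Set (List Γ) := {w | deltaStar δ q0 w ∈ F} with hL
  set NQ := Fintype.card Q with hNQ
  have hNQ0 : 0 < NQ := Fintype.card_pos
  -- extension function
  have hext : ∀ q : Q, ∃ s : List Γ, Live δ F q → (s.length < NQ ∧ deltaStar δ q s ∈ F) := by
    intro q
    by_cases hq : Live δ F q
    · obtain ⟨s, hs⟩ := live_short hq
      exact ⟨s, fun _ => hs⟩
    · exact ⟨[], fun hq' => absurd hq' hq⟩
  choose ext hext using hext
  obtain ⟨θ, hθ, c, hc, H⟩ := h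
  have hθ0 : (0:ℝ) < θ := lt_trans one_pos hθ
  refine ⟨θ, hθ, c / (NQ * θ ^ NQ), by positivity, fun N => ?_⟩
  obtain ⟨n, hn, hle⟩ := H N
  by_contra hcon
  push_neg at hcon
  -- the injection w ↦ w ++ ext (state w)
  set φ : List Γ → List Γ := fun w => w ++ ext (deltaStar δ q0 w) with hφ
  have hmaps : ∀ w ∈ {w ∈ pref L | w.length = n}, φ w ∈
      ⋃ m ∈ Finset.range NQ, {w ∈ L | w.length = n + m} := by
    rintro w ⟨hw, hwlen⟩
    have hlive : Live δ F (deltaStar δ q0 w) := (mem_pref_iff δ q0 F w).mp hw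
    obtain ⟨hslen, hsF⟩ := hext _ hlive
    simp only [Set.mem_iUnion, Finset.mem_range]
    refine ⟨(ext (deltaStar δ q0 w)).length, hslen, ?_, ?_⟩
    · show deltaStar δ q0 (φ w) ∈ F
      rw [hφ]; simp only []
      rw [deltaStar_append]; exact hsF
    · simp [hφ, hwlen]
  have hinj : Set.InjOn φ {w ∈ pref L | w.length = n} := by
    rintro w ⟨_, hwl⟩ w' ⟨_, hwl'⟩ heq
    have : (φ w).take n = (φ w').take n := by rw [heq]
    simpa [hφ, List.take_append_of_le_length, hwl.le, hwl'.le, List.take_length,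
      List.take_append, hwl, hwl'] using this
  have hfin : (⋃ m ∈ Finset.range NQ, {w ∈ L | w.length = n + m}).Finite :=
    Set.Finite.biUnion (Finset.range NQ).finite_toSet (fun m _ => finite_sect L (n+m))
  have hcard1 : {w ∈ pref L | w.length = n}.ncard ≤
      (⋃ m ∈ Finset.range NQ, {w ∈ L | w.length = n + m}).ncard :=
    Set.ncard_le_ncard_of_injOn φ hmaps hinj hfin
  have hcard2 : (⋃ m ∈ Finset.range NQ, {w ∈ L | w.length = n + m}).ncard ≤
      ∑ m ∈ Finset.range NQ, {w ∈ L | w.length = n + m}.ncard := by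
    classical
    have h1 : (⋃ m ∈ Finset.range NQ, {w ∈ L | w.length = n + m}).ncard = hfin.toFinset.card :=
      Set.ncard_eq_toFinset_card _ hfin
    have h2 : hfin.toFinset ⊆ (Finset.range NQ).biUnion
        (fun m => (finite_sect L (n+m)).toFinset) := by
      intro w hw
      simp only [Set.Finite.mem_toFinset, Set.mem_iUnion, Finset.mem_range] at hw
      simp only [Finset.mem_biUnion, Finset.mem_range, Set.Finite.mem_toFinset]
      obtain ⟨m, hm1, hm2⟩ := hw
      exact ⟨m, hm1, hm2⟩
    calc (⋃ m ∈ Finset.range NQ, {w ∈ L | w.length = n + m}).ncard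
        = hfin.toFinset.card := h1
      _ ≤ ((Finset.range NQ).biUnion (fun m => (finite_sect L (n+m)).toFinset)).card :=
          Finset.card_le_card h2
      _ ≤ ∑ m ∈ Finset.range NQ, (finite_sect L (n+m)).toFinset.card :=
          Finset.card_biUnion_le
      _ = ∑ m ∈ Finset.range NQ, {w ∈ L | w.length = n + m}.ncard := by
          refine Finset.sum_congr rfl (fun m _ => ?_)
          exact (Set.ncard_eq_toFinset_card _ (finite_sect L (n+m))).symm
  -- each term is small
  have hterm : ∀ m ∈ Finset.range NQ,
      ({w ∈ L | w.length = n + m}.ncard : ℝ) < c / (NQ * θ ^ NQ) * θ ^ NQ * θ ^ n := by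
    intro m hm
    have := hcon (n + m) (le_trans hn (Nat.le_add_right n m))
    have hpow : θ ^ (n + m) ≤ θ ^ n * θ ^ NQ := by
      rw [pow_add]
      gcongr
      · exact hθ.le
      · exact (Finset.mem_range.mp hm).le
    calc ({w ∈ L | w.length = n + m}.ncard : ℝ)
        < c / (NQ * θ ^ NQ) * θ ^ (n + m) := this
      _ ≤ c / (NQ * θ ^ NQ) * (θ ^ n * θ ^ NQ) := by
          apply mul_le_mul_of_nonneg_left hpow; positivity
      _ = c / (NQ * θ ^ NQ) * θ ^ NQ * θ ^ n := by ring
  have hsum : (∑ m ∈ Finset.range NQ, {w ∈ L | w.length = n + m}.ncard : ℝ) <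
      NQ * (c / (NQ * θ ^ NQ) * θ ^ NQ * θ ^ n) := by
    have := Finset.sum_lt_sum_of_nonempty (s := Finset.range NQ)
      (by simp [Finset.nonempty_range_iff, hNQ0.ne']) hterm
    calc (∑ m ∈ Finset.range NQ, {w ∈ L | w.length = n + m}.ncard : ℝ)
        = ∑ m ∈ Finset.range NQ, ({w ∈ L | w.length = n + m}.ncard : ℝ) := by push_cast; ring
      _ < ∑ _m ∈ Finset.range NQ, (c / (NQ * θ ^ NQ) * θ ^ NQ * θ ^ n) := this
      _ = NQ * (c / (NQ * θ ^ NQ) * θ ^ NQ * θ ^ n) := by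
          rw [Finset.sum_const, Finset.card_range]; ring
  have hfinal : NQ * (c / (NQ * θ ^ NQ) * θ ^ NQ * θ ^ n) = c * θ ^ n := by
    field_simp
  have : (({w ∈ pref L | w.length = n}).ncard : ℝ) < c * θ ^ n := by
    calc (({w ∈ pref L | w.length = n}).ncard : ℝ)
        ≤ ((⋃ m ∈ Finset.range NQ, {w ∈ L | w.length = n + m}).ncard : ℝ) := by
          exact_mod_cast hcard1
      _ ≤ (∑ m ∈ Finset.range NQ, {w ∈ L | w.length = n + m}.ncard : ℝ) := by
          exact_mod_cast hcard2
      _ < NQ * (c / (NQ * θ ^ NQ) * θ ^ NQ * θ ^ n) := hsum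
      _ = c * θ ^ n := hfinal
  exact absurd hle (not_le.mpr this)

/-- Two distinct equal-length cycles at a live reachable state. -/
def HasFork (δ : Q → Γ → Q) (q0 : Q) (F : Set Q) : Prop :=
  ∃ (q : Q) (u x y : List Γ), deltaStar δ q0 u = q ∧ Live δ F q ∧
    x.length = y.length ∧ x ≠ y ∧ deltaStar δ q x = q ∧ deltaStar δ q y = q

/-- Concatenation of blocks `x`/`y` according to a list of booleans. -/
def blocks (x y : List Γ) (bl : List Bool) : List Γ :=
  (bl.map fun t => if t then x else y).flatten

omit [Fintype Γ] [Fintype Q] in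
lemma blocks_append (x y : List Γ) (bl bl' : List Bool) :
    blocks x y (bl ++ bl') = blocks x y bl ++ blocks x y bl' := by
  simp [blocks]

omit [Fintype Γ] [Fintype Q] in
lemma blocks_length {x y : List Γ} (hlen : x.length = y.length) (bl : List Bool) :
    (blocks x y bl).length = bl.length * x.length := by
  induction bl with
  | nil => simp [blocks]
  | cons t tl ih =>
    simp only [blocks, List.map_cons, List.flatten_cons, List.length_append, List.length_cons]
    rw [show ((tl.map fun t => if t then x else y).flatten).length
        = (blocks x y tl).length from rfl, ih]
    cases t <;> simp [hlen] <;> ring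

omit [Fintype Γ] [Fintype Q] in
lemma deltaStar_blocks {δ : Q → Γ → Q} {q : Q} {x y : List Γ}
    (hx : deltaStar δ q x = q) (hy : deltaStar δ q y = q) (bl : List Bool) :
    deltaStar δ q (blocks x y bl) = q := by
  induction bl with
  | nil => simp [blocks, deltaStar]
  | cons t tl ih =>
    have : blocks x y (t :: tl) = (if t then x else y) ++ blocks x y tl := by
      simp [blocks]
    rw [this, deltaStar_append]
    cases t <;> simpa [hx, hy]

omit [Fintype Γ] [Fintype Q] in
lemma blocks_inj {x y : List Γ} (hlen : x.length = y.length) (hxy : x ≠ y) :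
    ∀ bl bl' : List Bool, bl.length = bl'.length →
      blocks x y bl = blocks x y bl' → bl = bl' := by
  intro bl
  induction bl with
  | nil => intro bl' h _; exact (List.length_eq_zero_iff.mp h.symm).symm ▸ rfl
  | cons t tl ih =>
    intro bl' h heq
    cases bl' with
    | nil => simp at h
    | cons t' tl' =>
      have h1 : blocks x y (t :: tl) = (if t then x else y) ++ blocks x y tl := by simp [blocks]
      have h2 : blocks x y (t' :: tl') = (if t' then x else y) ++ blocks x y tl' := by
        simp [blocks]
      rw [h1, h2] at heq
      have hll : (if t then x else y).length = (if t' then x else y).length := by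
        cases t <;> cases t' <;> simp [hlen]
      obtain ⟨he1, he2⟩ := List.append_inj heq hll
      have htt : t = t' := by
        by_contra hne
        cases t <;> cases t' <;> simp_all
      subst htt
      rw [ih tl' (by simpa using h) he2]

lemma exp_pref_of_fork {δ : Q → Γ → Q} {q0 : Q} {F : Set Q} (h : HasFork δ q0 F) :
    Exponential (pref {w | deltaStar δ q0 w ∈ F}) := by
  classical
  obtain ⟨q, u, x, y, hu, hlive, hlen, hxy, hx, hy⟩ := h
  set m := x.length with hm
  have hm0 : 0 < m := by
    rcases Nat.eq_zero_or_pos m with h0 | h0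
    · exfalso
      apply hxy
      rw [List.length_eq_zero_iff.mp (hm.symm.trans h0), List.length_eq_zero_iff.mp (hlen.symm.trans h0)]
    · exact h0
  set θ : ℝ := (2 : ℝ) ^ ((m : ℝ)⁻¹) with hθdef
  have hθ : 1 < θ := by
    rw [hθdef]
    rw [Real.one_lt_rpow_iff_of_pos (by norm_num)]
    left
    constructor
    · norm_num
    · positivity
  have hθ0 : (0:ℝ) < θ := lt_trans one_pos hθ
  refine ⟨θ, hθ, (θ ^ u.length)⁻¹, by positivity, fun N => ?_⟩
  set n := u.length + N * m with hn
  refine ⟨n, by have := Nat.le_mul_of_pos_right N hm0; omega, ?_⟩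
  -- the 2^N words
  have key : (θ ^ u.length)⁻¹ * θ ^ n = (2 : ℝ) ^ N := by
    have h1 : θ ^ n = (2:ℝ) ^ ((m:ℝ)⁻¹ * n) := by
      rw [hθdef, ← Real.rpow_natCast ((2:ℝ) ^ ((m:ℝ)⁻¹)) n, ← Real.rpow_mul (by norm_num)]
    have h2 : θ ^ u.length = (2:ℝ) ^ ((m:ℝ)⁻¹ * u.length) := by
      rw [hθdef, ← Real.rpow_natCast ((2:ℝ) ^ ((m:ℝ)⁻¹)) u.length,
        ← Real.rpow_mul (by norm_num)]
    rw [h1, h2, ← Real.rpow_neg (by norm_num), ← Real.rpow_add (by norm_num)]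
    have h3 : -((m:ℝ)⁻¹ * u.length) + (m:ℝ)⁻¹ * n = N := by
      have hmne : (m:ℝ) ≠ 0 := Nat.cast_ne_zero.mpr hm0.ne'
      field_simp [hn]
      rw [hn]
      push_cast
      ring
    rw [h3, Real.rpow_natCast]
  rw [key]
  -- injection from Fin N → Bool
  set e : (Fin N → Bool) → List Γ := fun b => u ++ blocks x y (List.ofFn b) with he
  have hmaps : ∀ b : Fin N → Bool, e b ∈ {w ∈ pref {w | deltaStar δ q0 w ∈ F} | w.length = n} := by
    intro b
    constructor
    · rw [mem_pref_iff]
      rw [he]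
      simp only []
      rw [deltaStar_append, hu, deltaStar_blocks hx hy]
      exact hlive
    · simp [he, blocks_length hlen, hn, ← hm]
  have hinj : Function.Injective e := by
    intro b b' heq
    rw [he] at heq
    simp only [] at heq
    have := List.append_cancel_left heq
    have hbl := blocks_inj hlen hxy _ _ (by simp) this
    exact List.ofFn_injective hbl
  have hcount : (2:ℕ) ^ N ≤ {w ∈ pref {w | deltaStar δ q0 w ∈ F} | w.length = n}.ncard := by
    have h1 : (Set.univ : Set (Fin N → Bool)).ncard ≤
        {w ∈ pref {w | deltaStar δ q0 w ∈ F} | w.length = n}.ncard :=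
      Set.ncard_le_ncard_of_injOn e (fun b _ => hmaps b) (hinj.injOn) (finite_sect _ n)
    rwa [Set.ncard_univ, Nat.card_eq_fintype_card, Fintype.card_fun, Fintype.card_bool,
      Fintype.card_fin] at h1
  calc ((2:ℝ)) ^ N = ((2 ^ N : ℕ) : ℝ) := by push_cast; ring
    _ ≤ _ := by exact_mod_cast hcount

lemma notCountable_funBool : ¬ Countable (ℕ → Bool) := by
  intro h
  have h1 : Cardinal.mk (ℕ → Bool) ≤ Cardinal.aleph0 := Cardinal.mk_le_aleph0_iff.mpr h
  have h2 : (2 : Cardinal) ^ Cardinal.aleph0 ≤ Cardinal.aleph0 := by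
    have he : Cardinal.mk (ℕ → Bool) = (2 : Cardinal) ^ Cardinal.aleph0 := by
      rw [Cardinal.mk_arrow]
      simp
    rw [he] at h1; exact h1
  exact absurd h2 (not_le.mpr (Cardinal.cantor _))

omit [Fintype Γ] [Fintype Q] in
lemma prefix_getD {p r : List Γ} (h : p <+: r) {k : ℕ} (hk : k < p.length) (d : Γ) :
    r.getD k d = p.getD k d := by
  obtain ⟨t, rfl⟩ := h
  exact List.getD_append p t d k hk

lemma uncountable_of_fork {δ : Q → Γ → Q} {q0 : Q} {F : Set Q} (hfork : HasFork δ q0 F) :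
    ¬ (adh {w | deltaStar δ q0 w ∈ F}).Countable := by
  classical
  obtain ⟨q, u, x, y, hu, hlive, hlen, hxy, hx, hy⟩ := hfork
  set m := x.length with hm
  have hm0 : 0 < m := by
    rcases Nat.eq_zero_or_pos m with h0 | h0
    · exfalso
      apply hxy
      rw [List.length_eq_zero_iff.mp (hm.symm.trans h0), List.length_eq_zero_iff.mp (hlen.symm.trans h0)]
    · exact h0
  have hxne : x ≠ [] := by
    intro h0; rw [h0] at hm; simp at hm; omega
  set d : Γ := x.head hxne with hd
  -- the infinite-word family
  set U : (ℕ → Bool) → ℕ → List Γ :=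
    fun b i => u ++ blocks x y (List.ofFn (fun j : Fin i => b j)) with hU
  have Ulen : ∀ b i, (U b i).length = u.length + i * m := by
    intro b i
    simp [hU, blocks_length hlen, ← hm]
  have Usucc : ∀ b i, U b (i + 1) = U b i ++ (if b i then x else y) := by
    intro b i
    have h1 : (List.ofFn (fun j : Fin (i+1) => b j)) =
        (List.ofFn (fun j : Fin i => b j)) ++ [b i] := by
      rw [List.ofFn_succ']
      simp [List.concat_eq_append, Fin.last]
    rw [hU]
    simp only [h1, blocks_append]
    have h2 : blocks x y [b i] = (if b i then x else y) := by
      simp [blocks]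
    rw [h2, List.append_assoc]
  have Uprefix : ∀ b i j, i ≤ j → U b i <+: U b j := by
    intro b i j hij
    obtain ⟨k, rfl⟩ := Nat.exists_eq_add_of_le hij
    induction k with
    | zero => exact List.prefix_rfl
    | succ k ih =>
      rw [show i + (k+1) = (i + k) + 1 from rfl, Usucc]
      exact ih (Nat.le_add_right i k) |>.trans (List.prefix_append _ _)
  have Ustate : ∀ b i, deltaStar δ q0 (U b i) = q := by
    intro b i
    rw [hU]
    simp only []
    rw [deltaStar_append, hu, deltaStar_blocks hx hy]
  set f : (ℕ → Bool) → ℕ → Γ := fun b k => (U b (k+1)).getD k d with hf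
  have hkinlen : ∀ b k, k < (U b (k+1)).length := by
    intro b k
    rw [Ulen]
    have := Nat.le_mul_of_pos_right (k+1) hm0
    omega
  have fval : ∀ b i k, k < (U b i).length → f b k = (U b i).getD k d := by
    intro b i k hk
    rcases le_total (k+1) i with h | h
    · exact (prefix_getD (Uprefix b (k+1) i h) (hkinlen b k) d).symm ▸
        (prefix_getD (Uprefix b (k+1) i h) (hkinlen b k) d).symm
    · rw [hf]
      exact (prefix_getD (Uprefix b i (k+1) h) hk d)
  have prefixOf_eq : ∀ b ℓ, prefixOf (f b) ℓ = (U b ℓ).take ℓ := by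
    intro b ℓ
    have hℓlen : ℓ ≤ (U b ℓ).length := by
      rw [Ulen]
      have := Nat.le_mul_of_pos_right ℓ hm0
      omega
    apply List.ext_getElem
    · simp [prefixOf, hℓlen]
    · intro i h1 h2
      simp only [prefixOf, List.getElem_ofFn, List.getElem_take]
      have hiℓ : i < ℓ := by simpa [prefixOf] using h1
      have hilen : i < (U b ℓ).length := lt_of_lt_of_le hiℓ hℓlen
      rw [show f b i = (U b ℓ).getD i d from fval b ℓ i hilen, List.getD_eq_getElem _ _ hilen]
  have hmem : ∀ b, f b ∈ adh {w | deltaStar δ q0 w ∈ F} := by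
    intro b ℓ
    rw [prefixOf_eq, mem_pref_iff]
    apply Live.extend ((U b ℓ).drop ℓ)
    rw [← deltaStar_append, List.take_append_drop, Ustate]
    exact hlive
  -- injectivity
  have hinj : Function.Injective f := by
    intro b b' heq
    by_contra hne
    have hex : ∃ j, b j ≠ b' j := by
      by_contra hno
      push_neg at hno
      exact hne (funext hno)
    set i := Nat.find hex with hi
    have hbi : b i ≠ b' i := Nat.find_spec hex
    have hmin : ∀ j < i, b j = b' j := fun j hj => by
      have := Nat.find_min hex hj
      simpa using this
    have hUeq : U b i = U b' i := by
      rw [hU]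
      simp only []
      have hfe : (fun j : Fin i => b j) = (fun j : Fin i => b' j) :=
        funext fun j => hmin j j.isLt
      rw [hfe]
    -- position where x and y differ
    have hdiff : ∃ jj < m, x.getD jj d ≠ y.getD jj d := by
      by_contra hno
      push_neg at hno
      apply hxy
      apply List.ext_getElem hlen
      intro j h1 h2
      have := hno j (by rwa [← hm] at h1)
      rwa [List.getD_eq_getElem x d h1, List.getD_eq_getElem y d h2] at this
    obtain ⟨jj, hjj, hjjne⟩ := hdiff
    set k : ℕ := u.length + i * m + jj with hk
    have hblen : ∀ t : Bool, (if t then x else y).length = m := by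
      intro t; cases t <;> simp [hlen, ← hm]
    have keyval : ∀ b0 : ℕ → Bool, U b0 i = U b i →
        f b0 k = (if b0 i then x else y).getD jj d := by
      intro b0 hUb0
      have hklen : k < (U b0 (i+1)).length := by
        rw [Ulen]
        have : (i+1) * m = i * m + m := by ring
        omega
      rw [fval b0 (i+1) k hklen, Usucc]
      have hlen0 : (U b0 i).length = u.length + i * m := Ulen b0 i
      rw [List.getD_append_right _ _ _ _ (by omega : (U b0 i).length ≤ k)]
      congr 1
      omega
    have h1 := keyval b rfl
    have h2 := keyval b' hUeq.symm
    rw [heq] at h1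
    rw [h1] at h2
    revert hjjne
    cases hb : b i <;> cases hb' : b' i <;> rw [hb, hb'] at h2 <;> simp_all
  -- conclude
  intro hcount
  have h1 : (Set.range f).Countable := hcount.mono (Set.range_subset_iff.mpr hmem)
  have h2 : Countable (Set.range f) := h1.to_subtype
  exact notCountable_funBool (Countable.of_equiv _ (Equiv.ofInjective f hinj).symm)

omit [Fintype Γ] [Fintype Q] in
lemma prefixOf_add (w : ℕ → Γ) (a b : ℕ) :
    prefixOf w (a + b) = prefixOf w a ++ List.ofFn (fun i : Fin b => w (a + i)) := by
  rw [prefixOf, List.ofFn_add]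
  rfl

lemma countable_adh_of_noFork {δ : Q → Γ → Q} {q0 : Q} {F : Set Q}
    (hnf : ¬ HasFork δ q0 F) :
    (adh {w | deltaStar δ q0 w ∈ F}).Countable := by
  classical
  rcases isEmpty_or_nonempty Γ with hΓ | hΓ
  · haveI : IsEmpty (ℕ → Γ) := ⟨fun f => IsEmpty.elim hΓ (f 0)⟩
    exact Set.to_countable _
  have d : Γ := Classical.arbitrary Γ
  -- unique-cycle property
  have huniq : ∀ (p : Q) (v x y : List Γ), deltaStar δ q0 v = p → Live δ F p →
      x.length = y.length → deltaStar δ p x = p → deltaStar δ p y = p → x = y := by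
    intro p v x y hv hl hxy hx hy
    by_contra hne
    exact hnf ⟨p, v, x, y, hv, hl, hxy, hne, hx, hy⟩
  -- decoding function
  set D : List Γ × List Γ → (ℕ → Γ) := fun p k =>
    if k < p.1.length then p.1.getD k d else p.2.getD ((k - p.1.length) % p.2.length) d with hD
  apply Set.Countable.mono ?_ (Set.countable_range D)
  intro w hw
  -- the run of w
  set r : ℕ → Q := fun i => deltaStar δ q0 (prefixOf w i) with hr
  have hlive : ∀ i, Live δ F (r i) := fun i => (mem_pref_iff δ q0 F (prefixOf w i)).mp (hw i)
  obtain ⟨q, hq⟩ := Finite.exists_infinite_fiber r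
  have hset : (r ⁻¹' {q}).Infinite := Set.infinite_coe_iff.mp hq
  obtain ⟨i₀, hi₀, _⟩ := hset.exists_gt 0
  obtain ⟨i₁, hi₁, hlt01⟩ := hset.exists_gt i₀
  have hri₀ : r i₀ = q := hi₀
  have hri₁ : r i₁ = q := hi₁
  set a := i₁ - i₀ with ha
  have ha0 : 0 < a := by omega
  -- segments
  set seg : ℕ → ℕ → List Γ := fun i j => List.ofFn (fun t : Fin (j - i) => w (i + t)) with hseg
  have hsplit : ∀ i j, i ≤ j → prefixOf w j = prefixOf w i ++ seg i j := by
    intro i j hij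
    rw [hseg]
    simp only []
    rw [← prefixOf_add w i (j - i)]
    congr 1
    omega
  have hstep : ∀ i j, i ≤ j → r j = deltaStar δ (r i) (seg i j) := by
    intro i j hij
    rw [hr]
    simp only []
    rw [hsplit i j hij, deltaStar_append]
  have hseglen : ∀ i j, (seg i j).length = j - i := by
    intro i j; simp [hseg]
  -- periodicity
  have hper : ∀ t, w (i₁ + t) = w (i₀ + t) := by
    intro t
    obtain ⟨k, hk, hklt⟩ := hset.exists_gt (i₁ + t)
    have hrk : r k = q := hk
    have h01 : i₀ ≤ i₁ := le_of_lt hlt01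
    have h1k : i₁ ≤ k := by omega
    have h0k : i₀ ≤ k := by omega
    have hX : deltaStar δ q (seg i₀ k) = q := by
      have h := hstep i₀ k h0k
      rw [hri₀, hrk] at h
      exact h.symm
    have hY : deltaStar δ q (seg i₁ k ++ seg i₀ i₁) = q := by
      rw [deltaStar_append]
      have e1 : deltaStar δ q (seg i₁ k) = q := by
        have h := hstep i₁ k h1k
        rw [hri₁, hrk] at h
        exact h.symm
      rw [e1]
      have h := hstep i₀ i₁ h01
      rw [hri₀, hri₁] at h
      exact h.symm
    have hlq : Live δ F q := hri₀ ▸ hlive i₀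
    have hXY : seg i₀ k = seg i₁ k ++ seg i₀ i₁ :=
      huniq q (prefixOf w i₀) _ _ hri₀ hlq (by simp [hseglen]; omega) hX hY
    have hidx : t < (seg i₁ k).length := by rw [hseglen]; omega
    have hidx0 : t < (seg i₀ k).length := by rw [hseglen]; omega
    have := congrArg (fun l : List Γ => l.getD t d) hXY
    rw [List.getD_eq_getElem _ _ hidx0, List.getD_append _ _ d t hidx,
      List.getD_eq_getElem _ _ hidx] at this
    simp only [hseg, List.getElem_ofFn] at this
    exact this.symm
  -- reduce to mod
  have hmod : ∀ t, w (i₀ + t) = w (i₀ + t % a) := by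
    intro t
    induction t using Nat.strong_induction_on with
    | _ t IH =>
      by_cases hlt : t < a
      · rw [Nat.mod_eq_of_lt hlt]
      · push_neg at hlt
        have h1 : t = (t - a) + a := by omega
        have h2 : w (i₀ + t) = w (i₀ + (t - a)) := by
          have := hper (i₀ + (t-a) - i₁ + (i₁ - i₀) + (t-a) - (t-a))
          -- simpler: i₁ + (t - a) = i₀ + t
          have he : i₁ + (t - a) = i₀ + t := by omega
          have := hper (t - a)
          rw [he] at this
          exact this
        rw [h2, IH (t-a) (by omega)]
        congr 1
        rw [Nat.mod_eq_sub_mod hlt]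
  refine ⟨(prefixOf w i₀, seg i₀ i₁), ?_⟩
  funext k
  rw [hD]
  simp only []
  have hplen : (prefixOf w i₀).length = i₀ := by simp [prefixOf]
  by_cases hk : k < i₀
  · rw [if_pos (by rwa [hplen]), List.getD_eq_getElem _ _ (by rwa [hplen])]
    simp [prefixOf, List.getElem_ofFn]
  · push_neg at hk
    rw [if_neg (show ¬ (k < (prefixOf w i₀).length) by rw [hplen]; omega)]
    rw [hplen, hseglen]
    have hidx : (k - i₀) % a < a := Nat.mod_lt _ ha0
    have hidx' : (k - i₀) % a < (seg i₀ i₁).length := by rw [hseglen]; omega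
    rw [List.getD_eq_getElem _ _ hidx']
    simp only [hseg, List.getElem_ofFn]
    have := hmod (k - i₀)
    rw [show i₀ + (k - i₀) = k from by omega] at this
    exact this.symm

omit [Fintype Γ] [Fintype Q] in
lemma blocks_getD_zero {x : List Γ} {k : ℕ} (hk : 0 < k) (hx : 0 < x.length) (d : Γ) :
    (blocks x x (List.replicate k true)).getD 0 d = x.getD 0 d := by
  obtain ⟨k', rfl⟩ := Nat.exists_eq_add_of_lt hk
  rw [show 0 + k' + 1 = k' + 1 from by omega, List.replicate_succ]
  show ((if true then x else x) ++ blocks x x (List.replicate k' true)).getD 0 d = _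
  rw [if_pos rfl, List.getD_append _ _ d 0 hx]

/-- The polynomial bound on sections of `pref L` when there is no fork. -/
lemma sect_card_of_noFork {δ : Q → Γ → Q} {q0 : Q} {F : Set Q}
    (hnf : ¬ HasFork δ q0 F) (n : ℕ) :
    {w ∈ pref {w | deltaStar δ q0 w ∈ F} | w.length = n}.ncard ≤
      ((n + 1) * Fintype.card Γ + 1) ^ Fintype.card Q := by
  classical
  set L : Set (List Γ) := {w | deltaStar δ q0 w ∈ F} with hL
  set NQ := Fintype.card Q with hNQ
  set G := Fintype.card Γ with hG
  rcases isEmpty_or_nonempty Γ with hΓ | hΓ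
  · have hsub : {w ∈ pref L | w.length = n} ⊆ {([] : List Γ)} := by
      intro w _
      cases w with
      | nil => rfl
      | cons a _ => exact (IsEmpty.elim hΓ a)
    calc {w ∈ pref L | w.length = n}.ncard ≤ ({([] : List Γ)} : Set (List Γ)).ncard :=
          Set.ncard_le_ncard hsub (Set.finite_singleton _)
      _ = 1 := Set.ncard_singleton _
      _ ≤ ((n + 1) * G + 1) ^ NQ := Nat.one_le_pow _ _ (by omega)
  have d : Γ := Classical.arbitrary Γ
  have huniq : ∀ (p : Q) (v x y : List Γ), deltaStar δ q0 v = p → Live δ F p →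
      x.length = y.length → deltaStar δ p x = p → deltaStar δ p y = p → x = y := by
    intro p v x y hv hl hxy hx hy
    by_contra hne
    exact hnf ⟨p, v, x, y, hv, hl, hxy, hne, hx, hy⟩
  -- states along a word
  set st : List Γ → ℕ → Q := fun w i => deltaStar δ q0 (w.take i) with hst
  -- last-occurrence positions
  set SS : List Γ → Finset ℕ := fun w =>
    (Finset.range w.length).filter
      (fun i => ∀ j ∈ Finset.Icc (i+1) w.length, st w j ≠ st w i) with hSS
  have hmemSS : ∀ (w : List Γ) (i : ℕ), i ∈ SS w ↔
      i < w.length ∧ ∀ j, i + 1 ≤ j → j ≤ w.length → st w j ≠ st w i := by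
    intro w i
    rw [hSS]
    simp [Finset.mem_filter, Finset.mem_range, Finset.mem_Icc, and_imp]
  have hScard : ∀ w : List Γ, (SS w).card ≤ NQ := by
    intro w
    have : (SS w).card ≤ (Finset.univ : Finset Q).card := by
      apply Finset.card_le_card_of_injOn (st w) (fun i _ => Finset.mem_univ _)
      intro i hi i' hi' heq
      by_contra hne
      rcases lt_or_gt_of_ne hne with hlt | hlt
      · obtain ⟨ha, hb⟩ := (hmemSS w i).mp hi
        have h2 := ((hmemSS w i').mp hi').1
        exact hb i' (by omega) (by omega) (by rw [heq])
      · obtain ⟨ha, hb⟩ := (hmemSS w i').mp hi'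
        have h2 := ((hmemSS w i).mp hi).1
        exact hb i (by omega) (by omega) (by rw [heq])
    simpa using this
  -- raw encoding
  set El : List Γ → List (ℕ × Γ) := fun w =>
    ((SS w).sort (·≤·)).map (fun i => (i, w.getD i d)) with hEl
  have hEl_len : ∀ w, (El w).length ≤ NQ := by
    intro w
    rw [hEl]
    simp only [List.length_map, Finset.length_sort]
    exact hScard w
  have hEl_mem : ∀ w i c, (i, c) ∈ El w ↔ i ∈ SS w ∧ c = w.getD i d := by
    intro w i c
    rw [hEl]
    simp only [List.mem_map, Finset.mem_sort]
    constructor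
    · rintro ⟨j, hj, hjc⟩
      have h1 : j = i := congrArg Prod.fst hjc
      subst h1
      exact ⟨hj, (congrArg Prod.snd hjc).symm⟩
    · rintro ⟨h1, rfl⟩
      exact ⟨i, h1, rfl⟩
  -- packed encoding into a small fintype
  set pack : (ℕ × Γ) → (Fin (n+1) × Γ) :=
    fun p => (⟨p.1 % (n+1), Nat.mod_lt _ (Nat.succ_pos n)⟩, p.2) with hpack
  set enc : List Γ → (Fin NQ → Option (Fin (n+1) × Γ)) :=
    fun w k => ((El w).map pack)[(k : ℕ)]? with henc
  have hinj : Set.InjOn enc {w ∈ pref L | w.length = n} := by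
    rintro w ⟨hw, hwlen⟩ w' ⟨hw', hwlen'⟩ heq
    have hmap_eq : (El w).map pack = (El w').map pack := by
      apply List.ext_getElem?
      intro k
      by_cases hk : k < NQ
      · have := congrFun heq ⟨k, hk⟩
        simpa [henc] using this
      · push_neg at hk
        rw [List.getElem?_eq_none_iff.mpr (by simpa using le_trans (hEl_len w) hk),
          List.getElem?_eq_none_iff.mpr (by simpa using le_trans (hEl_len w') hk)]
    have hrec : ∀ v : List Γ, v.length = n →
        ((El v).map pack).map (fun p : Fin (n+1) × Γ => ((p.1 : ℕ), p.2)) = El v := by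
      intro v hv
      rw [List.map_map]
      have hpt : ∀ p ∈ El v, ((fun p : Fin (n+1) × Γ => ((p.1 : ℕ), p.2)) ∘ pack) p = p := by
        rintro ⟨i, c⟩ hp
        have hmem := ((hEl_mem v i c).mp hp).1
        have hilt : i < n := by
          have := ((hmemSS v i).mp hmem).1
          omega
        simp only [hpack, Function.comp]
        rw [Nat.mod_eq_of_lt (by omega)]
      calc (El v).map ((fun p : Fin (n+1) × Γ => ((p.1 : ℕ), p.2)) ∘ pack)
          = (El v).map id := List.map_congr_left hpt
        _ = El v := List.map_id _
    have hEl_eq : El w = El w' := by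
      rw [← hrec w hwlen, hmap_eq, hrec w' hwlen']
    have hfst : ∀ v : List Γ, (El v).map Prod.fst = (SS v).sort (·≤·) := by
      intro v
      rw [hEl, List.map_map]
      calc ((SS v).sort (·≤·)).map (Prod.fst ∘ fun i => (i, v.getD i d))
          = ((SS v).sort (·≤·)).map id := List.map_congr_left (fun a _ => rfl)
        _ = (SS v).sort (·≤·) := List.map_id _
    have hSS_eq : SS w = SS w' := by
      have h1 := congrArg (List.map Prod.fst) hEl_eq
      rw [hfst, hfst] at h1
      have h2 := congrArg List.toFinset h1
      rwa [Finset.sort_toFinset, Finset.sort_toFinset] at h2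
    -- reconstruction
    have main : ∀ i, i < n → w.getD i d = w'.getD i d := by
      intro i
      induction i using Nat.strong_induction_on with
      | _ i IH =>
        intro hin
        have htake : w.take i = w'.take i := by
          apply List.ext_getElem
          · simp [hwlen, hwlen']
          · intro t h1 h2
            have htn : t < i := by
              simp only [List.length_take] at h1
              omega
            rw [List.getElem_take, List.getElem_take]
            have hgd := IH t htn (by omega)
            rwa [List.getD_eq_getElem _ _ (by omega : t < w.length),
              List.getD_eq_getElem _ _ (by omega : t < w'.length)] at hgd
        have hstw : st w i = st w' i := by
          rw [hst]
          simp only []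
          rw [htake]
        by_cases hiS : i ∈ SS w
        · have h1 : (i, w.getD i d) ∈ El w := (hEl_mem w i _).mpr ⟨hiS, rfl⟩
          rw [hEl_eq] at h1
          exact ((hEl_mem w' i _).mp h1).2
        · have hiS' : i ∉ SS w' := by rw [← hSS_eq]; exact hiS
          have hex : ∀ v : List Γ, v.length = n → i ∉ SS v →
              ∃ j, i + 1 ≤ j ∧ j ≤ n ∧ st v j = st v i := by
            intro v hv hnotin
            by_contra hno
            push_neg at hno
            apply hnotin
            rw [hmemSS]
            exact ⟨by omega, fun j hj1 hj2 h => hno j hj1 (by omega) h⟩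
          obtain ⟨j, hj1, hj2, hjst⟩ := hex w hwlen hiS
          obtain ⟨j', hj1', hj2', hjst'⟩ := hex w' hwlen' hiS'
          have cyc : ∀ v : List Γ, v.length = n → ∀ jj, i + 1 ≤ jj → jj ≤ n →
              st v jj = st v i →
              deltaStar δ (st v i) ((v.drop i).take (jj - i)) = st v i ∧
              ((v.drop i).take (jj - i)).length = jj - i ∧
              ((v.drop i).take (jj - i)).getD 0 d = v.getD i d := by
            intro v hv jj h1 h2 h3
            have hsplit : v.take jj = v.take i ++ (v.drop i).take (jj - i) := by
              rw [← List.take_add]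
              congr 1
              omega
            have hlen0 : ((v.drop i).take (jj - i)).length = jj - i := by
              rw [List.length_take, List.length_drop]
              omega
            refine ⟨?_, hlen0, ?_⟩
            · have hh : st v jj = deltaStar δ (st v i) ((v.drop i).take (jj - i)) := by
                rw [hst]
                simp only []
                rw [hsplit, deltaStar_append]
              rw [← hh, h3]
            · have h0 : 0 < ((v.drop i).take (jj - i)).length := by omega
              rw [List.getD_eq_getElem _ _ h0, List.getElem_take, List.getElem_drop,
                List.getD_eq_getElem _ _ (by omega : i < v.length)]
              simp
          obtain ⟨hXc, hXlen, hX0⟩ := cyc w hwlen j hj1 hj2 hjst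
          obtain ⟨hYc, hYlen, hY0⟩ := cyc w' hwlen' j' hj1' hj2' hjst'
          rw [← hstw] at hYc
          have hreach : deltaStar δ q0 (w.take i) = st w i := by rw [hst]
          have hlivep : Live δ F (st w i) := by
            have hpref : w.take i ∈ pref L := pref_prefix_closed hw (List.take_prefix i w)
            have hh := (mem_pref_iff δ q0 F (w.take i)).mp hpref
            rwa [hreach] at hh
          have hXpow : deltaStar δ (st w i)
              (blocks ((w.drop i).take (j - i)) ((w.drop i).take (j - i))
                (List.replicate (j' - i) true)) = st w i :=
            deltaStar_blocks hXc hXc _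
          have hYpow : deltaStar δ (st w i)
              (blocks ((w'.drop i).take (j' - i)) ((w'.drop i).take (j' - i))
                (List.replicate (j - i) true)) = st w i :=
            deltaStar_blocks hYc hYc _
          have hlenpow : (blocks ((w.drop i).take (j - i)) ((w.drop i).take (j - i))
                (List.replicate (j' - i) true)).length =
              (blocks ((w'.drop i).take (j' - i)) ((w'.drop i).take (j' - i))
                (List.replicate (j - i) true)).length := by
            rw [blocks_length rfl, blocks_length rfl, List.length_replicate,
              List.length_replicate, hXlen, hYlen]
            ring
          have hpoweq := huniq (st w i) (w.take i) _ _ hreach hlivep hlenpow hXpow hYpow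
          have hgd := congrArg (fun l : List Γ => l.getD 0 d) hpoweq
          rw [blocks_getD_zero (by omega) (by rw [hXlen]; omega) d,
            blocks_getD_zero (by omega) (by rw [hYlen]; omega) d] at hgd
          rw [← hX0, ← hY0]
          exact hgd
    apply List.ext_getElem (by rw [hwlen, hwlen'])
    intro t h1 h2
    have hgd := main t (by omega)
    rwa [List.getD_eq_getElem _ _ h1, List.getD_eq_getElem _ _ h2] at hgd
  -- counting
  have hbound : {w ∈ pref L | w.length = n}.ncard ≤
      (Set.univ : Set (Fin NQ → Option (Fin (n+1) × Γ))).ncard :=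
    Set.ncard_le_ncard_of_injOn enc (fun w _ => Set.mem_univ _) hinj Set.finite_univ
  rw [Set.ncard_univ, Nat.card_eq_fintype_card] at hbound
  calc {w ∈ pref L | w.length = n}.ncard
      ≤ Fintype.card (Fin NQ → Option (Fin (n+1) × Γ)) := hbound
    _ = ((n + 1) * G + 1) ^ NQ := by
        rw [Fintype.card_fun, Fintype.card_option, Fintype.card_prod, Fintype.card_fin,
          Fintype.card_fin]


lemma notExp_of_poly {Γ : Type*} {M : Set (List Γ)} {K E : ℕ}
    (hb : ∀ n, {w ∈ M | w.length = n}.ncard ≤ ((n + 1) * K + 1) ^ E) :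
    ¬ Exponential M := by
  rintro ⟨θ, hθ, c, hc, H⟩
  have hθ0 : (0:ℝ) < θ := lt_trans one_pos hθ
  have T : Filter.Tendsto (fun nn : ℕ => ((nn:ℝ)) ^ E / θ ^ nn) Filter.atTop (nhds 0) :=
    tendsto_pow_const_div_const_pow_of_one_lt E hθ
  have T' : Filter.Tendsto (fun nn : ℕ => (((nn+1 : ℕ)):ℝ) ^ E / θ ^ (nn+1))
      Filter.atTop (nhds 0) := T.comp (Filter.tendsto_add_atTop_nat 1)
  set A : ℝ := ((K:ℝ) + 1) ^ E with hA
  have hA0 : (0:ℝ) < A := by positivity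
  set ε : ℝ := c / (A * θ) with hε
  have hε0 : 0 < ε := by positivity
  have hev : ∀ᶠ nn in Filter.atTop, (((nn+1:ℕ)):ℝ) ^ E / θ ^ (nn+1) < ε :=
    T'.eventually_lt_const hε0
  obtain ⟨N₀, hN₀⟩ := Filter.eventually_atTop.mp hev
  obtain ⟨n, hn, hle⟩ := H N₀
  have step : (((n:ℝ))+1) ^ E / θ ^ (n+1) < ε := by
    have := hN₀ n hn
    push_cast at this
    exact this
  have h1 : ((((n + 1) * K + 1 : ℕ) : ℝ)) ^ E ≤ A * ((n:ℝ)+1) ^ E := by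
    rw [hA, ← mul_pow]
    apply pow_le_pow_left₀ (by positivity)
    push_cast
    nlinarith
  have hcast : (({w ∈ M | w.length = n}.ncard : ℝ)) ≤ ((((n + 1) * K + 1 : ℕ) : ℝ)) ^ E := by
    have := hb n
    calc (({w ∈ M | w.length = n}.ncard : ℝ)) ≤ ((((n + 1) * K + 1) ^ E : ℕ) : ℝ) := by
          exact_mod_cast this
      _ = ((((n + 1) * K + 1 : ℕ) : ℝ)) ^ E := by push_cast; ring
  have hfinal : c * θ ^ n < c * θ ^ n := by
    calc c * θ ^ n ≤ (({w ∈ M | w.length = n}.ncard : ℝ)) := hle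
      _ ≤ ((((n + 1) * K + 1 : ℕ) : ℝ)) ^ E := hcast
      _ ≤ A * ((n:ℝ)+1) ^ E := h1
      _ = A * θ ^ (n+1) * (((n:ℝ)+1) ^ E / θ ^ (n+1)) := by
          field_simp
      _ < A * θ ^ (n+1) * ε := by
          apply mul_lt_mul_of_pos_left step (by positivity)
      _ = c * θ ^ n := by
          rw [hε]
          field_simp
          ring
  exact lt_irrefl _ hfinal

end Stmt5

theorem stmt_5 {Γ : Type*} [Fintype Γ] (L : Set (List Γ))
    (hreg : ∃ (n : ℕ) (q0 : Fin n) (δ : Fin n → Γ → Fin n) (F : Set (Fin n)),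
      L = {w | deltaStar δ q0 w ∈ F}) :
    (¬ (adh L).Countable ↔ Exponential L) ∧
    (Exponential L ↔ Exponential (pref L)) := by
  obtain ⟨n, q0, δ, F, rfl⟩ := hreg
  haveI : Nonempty (Fin n) := ⟨q0⟩
  by_cases hfork : Stmt5.HasFork δ q0 F
  · have h1 := Stmt5.uncountable_of_fork hfork
    have h2 := Stmt5.exp_pref_of_fork hfork
    have h3 := Stmt5.exp_of_exp_pref δ q0 F h2
    exact ⟨⟨fun _ => h3, fun _ => h1⟩, ⟨fun _ => h2, fun _ => h3⟩⟩
  · have h1 := Stmt5.countable_adh_of_noFork hfork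
    have h2 : ¬ Exponential (pref {w | deltaStar δ q0 w ∈ F}) :=
      Stmt5.notExp_of_poly (fun m => Stmt5.sect_card_of_noFork hfork m)
    have h3 : ¬ Exponential {w | deltaStar δ q0 w ∈ F} := fun h =>
      h2 (Stmt5.Exponential.mono (fun w hw => ⟨w, hw, List.prefix_rfl⟩) h)
    exact ⟨⟨fun hc => absurd h1 hc, fun he => absurd he h3⟩,
      ⟨fun he => absurd he h3, fun he => absurd he h2⟩⟩
end

section
/- Let L be a language over a finite alphabet Σ accepted by a deterministic automaton A = (Q, q₀, Σ, δ, F) (the set of states Q may be infinite). If there exist a state q that is accessible (q = δ(q₀, x) for some word x) and coaccessible (δ(q, y) ∈ F for some word y) and words u, v with δ(q, u) = q, δ(q, v) = q and uv ≠ vu (two distinct cycles based at q), then adh(L) is uncountable and L is exponential. -/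
def myChain {Γ : Type*} (x : List Γ) (W : Bool → List Γ) (s : ℕ → Bool) : ℕ → List Γ
  | 0 => x
  | m + 1 => myChain x W s m ++ W (s m)

namespace myAux

variable {Γ : Type*} {x : List Γ} {W : Bool → List Γ} {s s' : ℕ → Bool} {k : ℕ}

theorem chain_prefix (hm : m ≤ m') : myChain x W s m <+: myChain x W s m' := by
  induction m' with
  | zero => simp_all
  | succ n ih =>
    rcases Nat.lt_or_ge m (n+1) with h | h
    · exact (ih (Nat.lt_succ_iff.mp h)).trans ⟨W (s n), rfl⟩
    · have : m = n + 1 := le_antisymm hm h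
      subst this; rfl

theorem length_chain (hW : ∀ b, (W b).length = k) (m : ℕ) :
    (myChain x W s m).length = x.length + m * k := by
  induction m with
  | zero => simp [myChain]
  | succ n ih => simp [myChain, ih, hW, Nat.succ_mul]; ring

theorem delta_chain {Q : Type*} {δ : Q → Γ → Q} {q0 q : Q} (hx : deltaStar δ q0 x = q)
    (hW : ∀ b, deltaStar δ q (W b) = q) (m : ℕ) :
    deltaStar δ q0 (myChain x W s m) = q := by
  induction m with
  | zero => exact hx
  | succ n ih =>
    show deltaStar δ q0 (myChain x W s n ++ W (s n)) = q
    rw [deltaStar, List.foldl_append]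
    rw [deltaStar] at ih; rw [ih]
    exact hW (s n)

theorem chain_congr (m : ℕ) (h : ∀ i < m, s i = s' i) :
    myChain x W s m = myChain x W s' m := by
  induction m with
  | zero => rfl
  | succ n ih =>
    show myChain x W s n ++ W (s n) = myChain x W s' n ++ W (s' n)
    rw [ih (fun i hi => h i (hi.trans (Nat.lt_succ_self n))), h n (Nat.lt_succ_self n)]

theorem chain_inj (hW : ∀ b, (W b).length = k) (hWne : W true ≠ W false) (m : ℕ)
    (h : myChain x W s m = myChain x W s' m) : ∀ i < m, s i = s' i := by
  induction m with
  | zero => omega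
  | succ n ih =>
    have h' : myChain x W s n ++ W (s n) = myChain x W s' n ++ W (s' n) := h
    have hlen : (W (s n)).length = (W (s' n)).length := by rw [hW, hW]
    obtain ⟨h1, h2⟩ := List.append_inj' h' hlen
    intro i hi
    rcases Nat.lt_or_ge i n with h3 | h3
    · exact ih h1 i h3
    · have : i = n := by omega
      subst this
      by_contra hne
      have : W (s i) = W (s' i) := h2
      rcases Bool.eq_false_or_eq_true (s i) with hb | hb <;>
        rcases Bool.eq_false_or_eq_true (s' i) with hb' | hb'
      · exact hne (hb.trans hb'.symm)
      · exact hWne (by rw [← hb', ← hb]; exact h2)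
      · exact hWne (by rw [← hb, ← hb']; exact h2.symm)
      · exact hne (hb.trans hb'.symm)

theorem prefix_getD {l1 l2 : List Γ} (h : l1 <+: l2) {n : ℕ} (hn : n < l1.length) (d : Γ) :
    l2.getD n d = l1.getD n d := by
  obtain ⟨t, rfl⟩ := h
  exact List.getD_append l1 t d n hn

end myAux

/-- The infinite word obtained by following the seed `x` with blocks `W (s 0), W (s 1), …`. -/
def myWord {Γ : Type*} (x : List Γ) (W : Bool → List Γ) (d : Γ) (s : ℕ → Bool) (n : ℕ) : Γ :=
  (myChain x W s (n + 1)).getD n d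

namespace myAux

variable {Γ : Type*} {x : List Γ} {W : Bool → List Γ} {d : Γ} {s s' : ℕ → Bool} {k : ℕ}

theorem lt_length_chain (hWlen : ∀ b, (W b).length = k) (hk : 0 < k) (n : ℕ) :
    n < (myChain x W s (n + 1)).length := by
  rw [length_chain hWlen]
  have : n + 1 ≤ (n + 1) * k := Nat.le_mul_of_pos_right _ hk
  omega

theorem word_stab (hWlen : ∀ b, (W b).length = k) (hk : 0 < k) {M n : ℕ}
    (hn : n < (myChain x W s M).length) :
    myWord x W d s n = (myChain x W s M).getD n d := by
  have h1 : myChain x W s M <+: myChain x W s (max M (n + 1)) :=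
    chain_prefix (Nat.le_max_left _ _)
  have h2 : myChain x W s (n + 1) <+: myChain x W s (max M (n + 1)) :=
    chain_prefix (Nat.le_max_right _ _)
  rw [myWord, ← prefix_getD h2 (lt_length_chain hWlen hk n) d, prefix_getD h1 hn d]

theorem prefixOf_word (hWlen : ∀ b, (W b).length = k) (hk : 0 < k) (s : ℕ → Bool) (ℓ : ℕ) :
    prefixOf (myWord x W d s) ℓ = (myChain x W s ℓ).take ℓ := by
  have hlen : ℓ ≤ (myChain x W s ℓ).length := by
    rw [length_chain hWlen]
    have : ℓ ≤ ℓ * k := Nat.le_mul_of_pos_right _ hk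
    omega
  apply List.ext_getElem
  · simp [prefixOf, List.length_take]; omega
  · intro i h1 h2
    have hi : i < ℓ := by simpa [prefixOf] using h1
    rw [List.getElem_take]
    simp only [prefixOf, List.getElem_ofFn]
    rw [← List.getD_eq_getElem _ d, ← word_stab hWlen hk (by omega)]

theorem word_inj (hWlen : ∀ b, (W b).length = k) (hk : 0 < k) (hWne : W true ≠ W false) :
    Function.Injective (myWord x W d) := by
  intro s s' h
  have key : ∀ m, s m = s' m := by
    intro m
    induction m using Nat.strong_induction_on with
    | _ m ih =>
    have hcc : myChain x W s m = myChain x W s' m := chain_congr m (fun i hi => ih i hi)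
    set p := x.length + m * k with hp
    have hlen1 : (myChain x W s m).length = p := length_chain hWlen m
    have hlen1' : (myChain x W s' m).length = p := length_chain hWlen m
    have hWeq : W (s m) = W (s' m) := by
      apply List.ext_getElem (by rw [hWlen, hWlen])
      intro j hj hj'
      have hjk : j < k := by rwa [hWlen] at hj
      have hb1 : p + j < (myChain x W s (m + 1)).length := by
        rw [length_chain hWlen]; simp only [hp]
        have : (m + 1) * k = m * k + k := by ring
        omega
      have hb2 : p + j < (myChain x W s' (m + 1)).length := by
        rw [length_chain hWlen]; simp only [hp]
        have : (m + 1) * k = m * k + k := by ring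
        omega
      have e1 : myWord x W d s (p + j) = (W (s m)).getD j d := by
        rw [word_stab hWlen hk hb1]
        show (myChain x W s m ++ W (s m)).getD (p + j) d = _
        rw [List.getD_append_right _ _ _ _ (by omega : (myChain x W s m).length ≤ p + j)]
        congr 1; omega
      have e2 : myWord x W d s' (p + j) = (W (s' m)).getD j d := by
        rw [word_stab hWlen hk hb2]
        show (myChain x W s' m ++ W (s' m)).getD (p + j) d = _
        rw [List.getD_append_right _ _ _ _ (by omega : (myChain x W s' m).length ≤ p + j)]
        congr 1; omega
      have : myWord x W d s (p + j) = myWord x W d s' (p + j) := congrFun h _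
      rw [e1, e2] at this
      rw [← List.getD_eq_getElem _ d, ← List.getD_eq_getElem _ d, this]
    by_contra hne
    rcases Bool.eq_false_or_eq_true (s m) with hb | hb <;>
      rcases Bool.eq_false_or_eq_true (s' m) with hb' | hb'
    · exact hne (hb.trans hb'.symm)
    · exact hWne (by rw [← hb', ← hb]; exact hWeq)
    · exact hWne (by rw [← hb, ← hb']; exact hWeq.symm)
    · exact hne (hb.trans hb'.symm)
  funext m
  exact key m

end myAux


theorem stmt_6 {Γ : Type*} [Fintype Γ] (L : Set (List Γ))
    {Q : Type*} (q0 : Q) (δ : Q → Γ → Q) (F : Set Q)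
    (hL : L = {w | deltaStar δ q0 w ∈ F})
    (hcyc : ∃ q : Q,
      (∃ x : List Γ, deltaStar δ q0 x = q) ∧
      (∃ y : List Γ, deltaStar δ q y ∈ F) ∧
      ∃ u v : List Γ, deltaStar δ q u = q ∧ deltaStar δ q v = q ∧ u ++ v ≠ v ++ u) :
    ¬ (adh L).Countable ∧ Exponential L := by
  classical
  obtain ⟨q, ⟨x, hx⟩, ⟨y, hy⟩, u, v, hu, hv, huv⟩ := hcyc
  -- basic facts about deltaStar on concatenations
  have hcat : ∀ (w1 w2 : List Γ) (r : Q),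
      deltaStar δ r (w1 ++ w2) = deltaStar δ (deltaStar δ r w1) w2 := by
    intro w1 w2 r; simp [deltaStar, List.foldl_append]
  set W : Bool → List Γ := fun b => if b then u ++ v else v ++ u with hW
  set k : ℕ := (u ++ v).length with hkdef
  have hWlen : ∀ b, (W b).length = k := by
    intro b; cases b <;> simp [hW, hkdef, Nat.add_comm]
  have hWq : ∀ b, deltaStar δ q (W b) = q := by
    intro b; cases b <;> simp [hW, hcat, hu, hv]
  have hWne : W true ≠ W false := by simpa [hW] using huv
  have huvne : u ++ v ≠ [] := by
    intro h
    rcases List.append_eq_nil_iff.mp h with ⟨h1, h2⟩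
    exact huv (by rw [h1, h2])
  have hk : 0 < k := by
    rw [hkdef]; exact List.length_pos_iff.mpr huvne
  set d : Γ := (u ++ v).head huvne with hd
  -- membership of chains (plus final word y) in L
  have hchainL : ∀ (s : ℕ → Bool) (m : ℕ), myChain x W s m ++ y ∈ L := by
    intro s m
    rw [hL]
    show deltaStar δ q0 (myChain x W s m ++ y) ∈ F
    rw [hcat, myAux.delta_chain hx hWq]
    exact hy
  constructor
  · -- uncountability of the adherence
    intro hcnt
    have hmem : ∀ s : ℕ → Bool, myWord x W d s ∈ adh L := by
      intro s ℓ
      refine ⟨myChain x W s ℓ ++ y, hchainL s ℓ, ?_⟩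
      rw [show prefixOf (myWord x W d s) ℓ = (myChain x W s ℓ).take ℓ from
        myAux.prefixOf_word hWlen hk s ℓ]
      exact (List.take_prefix ℓ _).trans (List.prefix_append _ _)
    have hsub : Countable ↥(adh L) := hcnt.to_subtype
    have hg : Function.Injective (fun s : ℕ → Bool => (⟨myWord x W d s, hmem s⟩ : ↥(adh L))) :=
      fun a b hab => myAux.word_inj hWlen hk hWne (congrArg Subtype.val hab)
    have hcb : Countable (ℕ → Bool) := hg.countable
    obtain ⟨e, he⟩ := (countable_iff_exists_injective (ℕ → Bool)).mp hcb
    have hset : Function.Injective (fun S : Set ℕ => fun n => decide (n ∈ S)) := by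
      intro S T h
      ext n
      have := congrFun h n
      simpa using this
    exact Function.cantor_injective (fun S : Set ℕ => e (fun n => decide (n ∈ S)))
      (he.comp hset)
  · -- exponential growth
    have hk' : (k : ℝ) ≠ 0 := Nat.cast_ne_zero.mpr hk.ne'
    refine ⟨(2 : ℝ) ^ ((k : ℝ)⁻¹),
      (Real.one_lt_rpow_iff_of_pos (by norm_num)).mpr
        (Or.inl ⟨one_lt_two, by positivity⟩),
      (2 : ℝ) ^ (-((x.length + y.length : ℕ) : ℝ) * (k : ℝ)⁻¹),
      Real.rpow_pos_of_pos (by norm_num) _, ?_⟩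
    intro N
    set m := N with hm
    set n := x.length + y.length + m * k with hn
    have hNn : N ≤ n := by
      have : m ≤ m * k := Nat.le_mul_of_pos_right _ hk
      omega
    refine ⟨n, hNn, ?_⟩
    -- the injection from boolean sequences of length m into L ∩ Σ^n
    set ext : (Fin m → Bool) → (ℕ → Bool) :=
      fun s i => if h : i < m then s ⟨i, h⟩ else false with hext
    set ψ : (Fin m → Bool) → List Γ := fun s => myChain x W (ext s) m ++ y with hψ
    have hψmem : ∀ s, ψ s ∈ {w ∈ L | w.length = n} := by
      intro s
      refine ⟨hchainL (ext s) m, ?_⟩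
      simp only [hψ, List.length_append, myAux.length_chain hWlen, hn]
      omega
    have hψinj : Function.Injective ψ := by
      intro s s' h
      have h1 : myChain x W (ext s) m = myChain x W (ext s') m :=
        List.append_cancel_right h
      have h2 := myAux.chain_inj hWlen hWne m h1
      funext i
      have := h2 i.1 i.2
      simpa [hext, i.2] using this
    -- cardinality count
    have hfin : {w ∈ L | w.length = n}.Finite :=
      (List.finite_length_eq Γ n).subset (fun w hw => hw.2)
    set T : Finset (List Γ) := Finset.image ψ Finset.univ with hT
    have hTcard : T.card = 2 ^ m := by
      rw [hT, Finset.card_image_of_injective _ hψinj, Finset.card_univ]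
      simp
    have hTsub : (T : Set (List Γ)) ⊆ {w ∈ L | w.length = n} := by
      intro w hw
      simp only [hT, Finset.coe_image, Finset.coe_univ, Set.image_univ] at hw
      obtain ⟨s, rfl⟩ := hw
      exact hψmem s
    have hcard : 2 ^ m ≤ {w ∈ L | w.length = n}.ncard := by
      rw [← hTcard, ← Set.ncard_coe_finset]
      exact Set.ncard_le_ncard hTsub hfin
    -- the real computation
    have hreal : (2 : ℝ) ^ (-((x.length + y.length : ℕ) : ℝ) * (k : ℝ)⁻¹) *
        ((2 : ℝ) ^ ((k : ℝ)⁻¹)) ^ n = (2 : ℝ) ^ (m : ℕ) := by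
      rw [← Real.rpow_natCast ((2 : ℝ) ^ ((k : ℝ)⁻¹)) n,
        ← Real.rpow_natCast (2 : ℝ) m,
        ← Real.rpow_mul (by norm_num : (0 : ℝ) ≤ 2),
        ← Real.rpow_add (by norm_num : (0 : ℝ) < 2)]
      congr 1
      have hncast : (n : ℝ) = ((x.length + y.length : ℕ) : ℝ) + (m : ℝ) * (k : ℝ) := by
        rw [hn]; push_cast; ring
      field_simp
      rw [hncast]; push_cast; ring
    rw [hreal]
    calc ((2 : ℝ) ^ (m : ℕ)) = ((2 ^ m : ℕ) : ℝ) := by push_cast; ring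
    _ ≤ ({w ∈ L | w.length = n}.ncard : ℝ) := Nat.cast_le.mpr hcard
end

section
/- Let L be a language over a finite alphabet Σ recognized by a deterministic automaton A = (Q, q₀, Σ, δ, F) whose set F of final states is finite (Q may be infinite). Then the set L_∞ of infinite words with infinitely many prefixes in L is uncountable if and only if there exist an accessible state q and words u, v with δ(q, u) = q, δ(q, v) = q, uv ≠ vu, some prefix u' of u with δ(q, u') ∈ F and some prefix v' of v with δ(q, v') ∈ F (two distinct cycles based at q, each passing through a final state). -/
/-- `Linf L` : infinite words having infinitely many finite prefixes in `L`. -/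
def Linf {A : Type*} (L : Set (List A)) : Set (ℕ → A) :=
  {w | {n : ℕ | prefixOf w n ∈ L}.Infinite}

namespace Stmt8Aux

theorem deltaStar_append {Q A : Type*} (δ : Q → A → Q) (q : Q) (u v : List A) :
    deltaStar δ q (u ++ v) = deltaStar δ (deltaStar δ q u) v := List.foldl_append

theorem not_countable_nat_bool : ¬ Countable (ℕ → Bool) := by
  intro h
  obtain ⟨f, hf⟩ := exists_injective_nat (ℕ → Bool)
  classical
  have : Function.Injective (fun s : Set ℕ => f (fun n => decide (n ∈ s))) := by
    intro s t hst
    ext n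
    have := congrFun (hf hst) n
    simpa using this
  exact Function.cantor_injective _ this

def seg {Γ : Type*} (w : ℕ → Γ) (a b : ℕ) : List Γ := List.ofFn (fun i : Fin (b - a) => w (a + i))

@[simp] theorem seg_length {Γ : Type*} (w : ℕ → Γ) (a b : ℕ) : (seg w a b).length = b - a := by
  simp [seg]

theorem seg_getElem? {Γ : Type*} (w : ℕ → Γ) (a b i : ℕ) (h : i < b - a) :
    (seg w a b)[i]? = some (w (a + i)) := by
  simp [seg, List.getElem?_ofFn, h]

theorem prefixOf_eq_seg {Γ : Type*} (w : ℕ → Γ) (n : ℕ) : prefixOf w n = seg w 0 n := by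
  simp [prefixOf, seg]

theorem seg_append {Γ : Type*} (w : ℕ → Γ) {a b c : ℕ} (hab : a ≤ b) (hbc : b ≤ c) :
    seg w a b ++ seg w b c = seg w a c := by
  apply List.ext_getElem?
  intro i
  rcases Nat.lt_or_ge i (b - a) with h | h
  · rw [List.getElem?_append_left (by simp [h]), seg_getElem? w a b i h,
      seg_getElem? w a c i (by omega)]
  · rcases Nat.lt_or_ge i (c - a) with h2 | h2
    · have e1 : (seg w b c)[i - (b-a)]? = some (w (b + (i - (b-a)))) :=
        seg_getElem? w b c _ (by omega)
      have e2 : b + (i - (b - a)) = a + i := by omega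
      rw [List.getElem?_append_right (by simp [h]), seg_length, e1, e2,
        seg_getElem? w a c i h2]
    · rw [List.getElem?_eq_none (by simp; omega), List.getElem?_eq_none (by simp; omega)]

/-- Eventually periodic words form a countable set. -/
theorem countable_eventually_periodic {Γ : Type*} [Countable Γ] :
    (⋃ N : ℕ, ⋃ k : ℕ, {w : ℕ → Γ | ∀ m ≥ N, w (m + (k+1)) = w m}).Countable := by
  apply Set.countable_iUnion; intro N
  apply Set.countable_iUnion; intro k
  have hinj : Function.Injective
      (fun w : {w : ℕ → Γ | ∀ m ≥ N, w (m + (k+1)) = w m} => prefixOf w.1 (N + (k+1))) := by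
    rintro ⟨w, hw⟩ ⟨w', hw'⟩ h
    simp only [prefixOf] at h
    have hfun := List.ofFn_inj.mp h
    apply Subtype.ext
    funext nn
    show w nn = w' nn
    induction nn using Nat.strong_induction_on with
    | _ nn ih =>
      rcases Nat.lt_or_ge nn (N + (k+1)) with hlt | hge
      · exact congrFun hfun ⟨nn, hlt⟩
      · have e : nn = (nn - (k+1)) + (k+1) := by omega
        rw [e, hw (nn - (k+1)) (by omega), hw' (nn - (k+1)) (by omega)]
        exact ih _ (by omega)
  exact Set.countable_coe_iff.mp hinj.countable

/-- The hard direction: if no pair of noncommuting final cycles exists, `Linf L` is countable. -/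
theorem hard_dir {Γ : Type*} [Countable Γ] {Q : Type*} (q0 : Q) (δ : Q → Γ → Q) (F : Set Q)
    (hF : F.Finite) (L : Set (List Γ)) (hL : L = {w | deltaStar δ q0 w ∈ F})
    (hR : ¬ ∃ q : Q,
        (∃ x : List Γ, deltaStar δ q0 x = q) ∧
        ∃ u v : List Γ, deltaStar δ q u = q ∧ deltaStar δ q v = q ∧ u ++ v ≠ v ++ u ∧
          (∃ u' : List Γ, u' <+: u ∧ deltaStar δ q u' ∈ F) ∧
          (∃ v' : List Γ, v' <+: v ∧ deltaStar δ q v' ∈ F)) :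
    (Linf L).Countable := by
  apply Set.Countable.mono _ countable_eventually_periodic
  intro w hw
  have hS : {n | prefixOf w n ∈ L}.Infinite := hw
  -- pigeonhole on the (finitely many) final states
  have hpigeon : ∃ f ∈ F,
      {n | prefixOf w n ∈ L ∧ deltaStar δ q0 (prefixOf w n) = f}.Infinite := by
    by_contra hcon
    push_neg at hcon
    have hsub : {n | prefixOf w n ∈ L} ⊆
        ⋃ f ∈ F, {n | prefixOf w n ∈ L ∧ deltaStar δ q0 (prefixOf w n) = f} := by
      intro n hn
      have hf : deltaStar δ q0 (prefixOf w n) ∈ F := by rw [hL] at hn; exact hn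
      exact Set.mem_biUnion hf ⟨hn, rfl⟩
    exact ((hF.biUnion (fun f hf => hcon f hf)).subset hsub).not_infinite hS
  obtain ⟨f, hfF, hT⟩ := hpigeon
  obtain ⟨n₀, hn₀⟩ := hT.nonempty
  obtain ⟨n₁, hn₁, hlt₀₁⟩ := hT.exists_gt n₀
  -- cycles at f commute
  have cyc : ∀ a b : ℕ, a ≤ b → deltaStar δ q0 (prefixOf w a) = f →
      deltaStar δ q0 (prefixOf w b) = f → deltaStar δ f (seg w a b) = f := by
    intro a b hab h1 h2
    have hsp : prefixOf w b = prefixOf w a ++ seg w a b := by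
      rw [prefixOf_eq_seg, prefixOf_eq_seg, seg_append w (Nat.zero_le a) hab]
    rw [hsp, deltaStar_append, h1] at h2
    exact h2
  refine Set.mem_iUnion.mpr ⟨n₀, Set.mem_iUnion.mpr ⟨n₁ - n₀ - 1, ?_⟩⟩
  intro m hm
  have hk1 : n₁ - n₀ - 1 + 1 = n₁ - n₀ := by omega
  rw [hk1]
  obtain ⟨n, hnT, hngt⟩ := hT.exists_gt (n₁ + m)
  have hu : deltaStar δ f (seg w n₀ n₁) = f := cyc n₀ n₁ (by omega) hn₀.2 hn₁.2
  have hr : deltaStar δ f (seg w n₁ n) = f := cyc n₁ n (by omega) hn₁.2 hnT.2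
  have hfe : deltaStar δ f ([] : List Γ) = f := rfl
  have hcomm : seg w n₀ n₁ ++ seg w n₁ n = seg w n₁ n ++ seg w n₀ n₁ := by
    by_contra hne
    exact hR ⟨f, ⟨prefixOf w n₀, hn₀.2⟩, seg w n₀ n₁, seg w n₁ n, hu, hr, hne,
      ⟨[], List.nil_prefix, by rw [hfe]; exact hfF⟩,
      ⟨[], List.nil_prefix, by rw [hfe]; exact hfF⟩⟩
  have key : seg w n₀ n = seg w n₁ n ++ seg w n₀ n₁ := by
    rw [← seg_append w (le_of_lt hlt₀₁) (by omega : n₁ ≤ n)]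
    exact hcomm
  have h1 : (seg w n₀ n)[m - n₀]? = some (w (n₀ + (m - n₀))) :=
    seg_getElem? w n₀ n _ (by omega)
  have h2 : (seg w n₁ n)[m - n₀]? = some (w (n₁ + (m - n₀))) :=
    seg_getElem? w n₁ n _ (by omega)
  rw [key, List.getElem?_append_left (by rw [seg_length]; omega), h2] at h1
  have hval := Option.some.inj h1
  have e1 : n₁ + (m - n₀) = m + (n₁ - n₀) := by omega
  have e2 : n₀ + (m - n₀) = m := by omega
  rw [e1, e2] at hval
  exact hval

variable {Γ : Type*}

def blocksAux (x : List Γ) (c : Bool → List Γ) (s : ℕ → Bool) (n : ℕ) : List Γ :=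
  x ++ ((List.range n).map (fun i => c (s i))).flatten

theorem blocksAux_zero (x : List Γ) (c s) : blocksAux x c s 0 = x := by simp [blocksAux]

theorem blocksAux_succ (x : List Γ) (c s) (n : ℕ) :
    blocksAux x c s (n+1) = blocksAux x c s n ++ c (s n) := by
  simp [blocksAux, List.range_succ]

theorem blocksAux_length (x : List Γ) (c : Bool → List Γ) (s) {ℓ : ℕ}
    (hclen : ∀ b, (c b).length = ℓ) (n : ℕ) :
    (blocksAux x c s n).length = x.length + n * ℓ := by
  induction n with
  | zero => simp [blocksAux_zero]
  | succ n ih => rw [blocksAux_succ]; simp [ih, hclen]; ring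

theorem blocksAux_prefix (x : List Γ) (c s) {k k' : ℕ} (h : k ≤ k') :
    blocksAux x c s k <+: blocksAux x c s k' := by
  induction k', h using Nat.le_induction with
  | base => exact List.prefix_refl _
  | succ m hm ih => rw [blocksAux_succ]; exact ih.trans (List.prefix_append _ _)

def Wd (x : List Γ) (c : Bool → List Γ) (d : Γ) (s : ℕ → Bool) (m : ℕ) : Γ :=
  (blocksAux x c s (m+1)).getD m d

theorem blocksAux_getElem (x : List Γ) (c : Bool → List Γ) (d : Γ) (s) {ℓ : ℕ}
    (hclen : ∀ b, (c b).length = ℓ) (hℓ : 0 < ℓ) (k m : ℕ)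
    (hm : m < (blocksAux x c s k).length) :
    (blocksAux x c s k)[m] = Wd x c d s m := by
  have hm1 : m < (blocksAux x c s (m+1)).length := by
    rw [blocksAux_length x c s hclen]; nlinarith
  rw [Wd, List.getD_eq_getElem _ _ hm1]
  rcases le_total k (m+1) with h | h
  · exact (blocksAux_prefix x c s h).getElem hm
  · exact ((blocksAux_prefix x c s h).getElem hm1).symm

theorem prefixOf_Wd (x : List Γ) (c : Bool → List Γ) (d : Γ) (s) {ℓ : ℕ}
    (hclen : ∀ b, (c b).length = ℓ) (hℓ : 0 < ℓ) (k n : ℕ)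
    (hn : n ≤ (blocksAux x c s k).length) :
    prefixOf (Wd x c d s) n = (blocksAux x c s k).take n := by
  apply List.ext_getElem
  · simp [prefixOf]; omega
  · intro i h1 h2
    have h1' : i < n := by simpa [prefixOf] using h1
    have hi : i < (blocksAux x c s k).length := by omega
    rw [List.getElem_take]
    rw [blocksAux_getElem x c d s hclen hℓ k i hi]
    simp [prefixOf]

/-- The easy direction: two noncommuting final cycles give uncountably many words. -/
theorem easy_dir {Γ : Type*} {Q : Type*} (q0 : Q) (δ : Q → Γ → Q) (F : Set Q)
    (L : Set (List Γ)) (hL : L = {w | deltaStar δ q0 w ∈ F})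
    (q : Q) (x : List Γ) (hx : deltaStar δ q0 x = q)
    (u v : List Γ) (hu : deltaStar δ q u = q) (hv : deltaStar δ q v = q)
    (hne : u ++ v ≠ v ++ u)
    (u' : List Γ) (hu'p : u' <+: u) (hu'F : deltaStar δ q u' ∈ F)
    (v' : List Γ) (hv'p : v' <+: v) (hv'F : deltaStar δ q v' ∈ F) :
    ¬ (Linf L).Countable := by
  classical
  have hune : u ≠ [] := by rintro rfl; simp at hne
  have hvne : v ≠ [] := by rintro rfl; simp at hne
  set ℓ := u.length + v.length with hℓdef
  have hℓ : 0 < ℓ := by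
    have := List.length_pos_iff.mpr hune; omega
  set c : Bool → List Γ := fun b => if b then u ++ v else v ++ u with hc
  have hclen : ∀ b, (c b).length = ℓ := by
    intro b; cases b <;> simp [hc, hℓdef] <;> omega
  have hccyc : ∀ b, deltaStar δ q (c b) = q := by
    intro b; cases b <;> simp [hc, deltaStar_append, hu, hv]
  have hcfin : ∀ b, ∃ p : List Γ, p <+: c b ∧ deltaStar δ q p ∈ F ∧ p.length < ℓ := by
    intro b; cases b
    · exact ⟨v', hv'p.trans (List.prefix_append v u), hv'F,
        lt_of_le_of_lt hv'p.length_le (by have := List.length_pos_iff.mpr hune; omega)⟩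
    · exact ⟨u', hu'p.trans (List.prefix_append u v), hu'F,
        lt_of_le_of_lt hu'p.length_le (by have := List.length_pos_iff.mpr hvne; omega)⟩
  choose pf hpf_pre hpf_F hpf_len using hcfin
  have d : Γ := u.head hune
  -- the word associated to s lies in Linf L
  have hmem : ∀ s : ℕ → Bool, Wd x c d s ∈ Linf L := by
    intro s
    have hdelta : ∀ k, deltaStar δ q0 (blocksAux x c s k) = q := by
      intro k
      induction k with
      | zero => rw [blocksAux_zero]; exact hx
      | succ k ih => rw [blocksAux_succ, deltaStar_append, ih, hccyc]
    have key : ∀ k, prefixOf (Wd x c d s) ((blocksAux x c s k).length + (pf (s k)).length) ∈ L := by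
      intro k
      have hpre : blocksAux x c s k ++ pf (s k) <+: blocksAux x c s (k+1) := by
        rw [blocksAux_succ]
        obtain ⟨t, ht⟩ := hpf_pre (s k)
        exact ⟨t, by rw [List.append_assoc, ht]⟩
      have hlen : (blocksAux x c s k ++ pf (s k)).length
          = (blocksAux x c s k).length + (pf (s k)).length := by simp
      have : prefixOf (Wd x c d s) ((blocksAux x c s k).length + (pf (s k)).length)
          = blocksAux x c s k ++ pf (s k) := by
        rw [prefixOf_Wd x c d s hclen hℓ (k+1) _ (by rw [← hlen]; exact hpre.length_le)]
        rw [← hlen]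
        exact (List.prefix_iff_eq_take.mp hpre).symm
      rw [this, hL]
      show deltaStar δ q0 _ ∈ F
      rw [deltaStar_append, hdelta k]
      exact hpf_F (s k)
    have hsm : StrictMono (fun k => (blocksAux x c s k).length + (pf (s k)).length) := by
      apply strictMono_nat_of_lt_succ
      intro k
      rw [blocksAux_length x c s hclen, blocksAux_length x c s hclen]
      have h1 := hpf_len (s k)
      have h2 := hpf_len (s (k+1))
      nlinarith
    exact Set.infinite_of_injective_forall_mem hsm.injective key
  -- injectivity
  have hinj : Function.Injective (fun s : ℕ → Bool => Wd x c d s) := by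
    have hab : u ++ v ≠ v ++ u := hne
    have : ∃ j : ℕ, ∃ hj : j < ℓ, (u ++ v)[j]'(by simp [hℓdef]; omega) ≠ (v ++ u)[j]'(by simp [hℓdef]; omega) := by
      by_contra hcon
      push_neg at hcon
      apply hab
      apply List.ext_getElem (by simp; omega)
      intro i hi1 hi2
      exact hcon i (by simp [hℓdef] at hi1; omega)
    obtain ⟨j, hj, hjne⟩ := this
    intro s s' hss
    by_contra hne'
    obtain ⟨k, hk⟩ := Function.ne_iff.mp hne'
    have hc1 : ∀ t : ℕ → Bool, (c (t k))[j]? = some (Wd x c d t (x.length + k * ℓ + j)) := by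
      intro t
      have hblen : (blocksAux x c t k).length = x.length + k * ℓ :=
        blocksAux_length x c t hclen k
      have hlt : x.length + k * ℓ + j < (blocksAux x c t (k+1)).length := by
        rw [blocksAux_length x c t hclen]; nlinarith
      rw [← blocksAux_getElem x c d t hclen hℓ (k+1) _ hlt,
        ← List.getElem?_eq_getElem hlt, blocksAux_succ,
        List.getElem?_append_right (by rw [hblen]; omega), hblen]
      congr 1
      omega
    have e1 : c true = u ++ v := by simp [hc]
    have e2 : c false = v ++ u := by simp [hc]
    have heq : (c (s k))[j]? = (c (s' k))[j]? := by
      rw [hc1 s, hc1 s']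
      exact congrArg some (congrFun hss (x.length + k * ℓ + j))
    have hju : j < (u ++ v).length := by simp [hℓdef] at hj ⊢; omega
    have hjv : j < (v ++ u).length := by simp [hℓdef] at hj ⊢; omega
    rcases Bool.eq_false_or_eq_true (s k) with h1 | h1 <;>
      rcases Bool.eq_false_or_eq_true (s' k) with h2 | h2
    · exact hk (h1.trans h2.symm)
    · rw [h1, h2, e1, e2, List.getElem?_eq_getElem hju, List.getElem?_eq_getElem hjv] at heq
      exact hjne (Option.some.inj heq)
    · rw [h1, h2, e1, e2, List.getElem?_eq_getElem hju, List.getElem?_eq_getElem hjv] at heq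
      exact hjne (Option.some.inj heq).symm
    · exact hk (h1.trans h2.symm)
  intro hcount
  haveI := hcount.to_subtype
  have : Function.Injective (fun s : ℕ → Bool => (⟨Wd x c d s, hmem s⟩ : ↥(Linf L))) := by
    intro s s' h
    exact hinj (congrArg Subtype.val h)
  exact not_countable_nat_bool this.countable

end Stmt8Aux

theorem stmt_8 {Γ : Type*} [Fintype Γ] (L : Set (List Γ))
    {Q : Type*} (q0 : Q) (δ : Q → Γ → Q) (F : Set Q) (hF : F.Finite)
    (hL : L = {w | deltaStar δ q0 w ∈ F}) :
    ¬ (Linf L).Countable ↔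
      ∃ q : Q,
        (∃ x : List Γ, deltaStar δ q0 x = q) ∧
        ∃ u v : List Γ, deltaStar δ q u = q ∧ deltaStar δ q v = q ∧ u ++ v ≠ v ++ u ∧
          (∃ u' : List Γ, u' <+: u ∧ deltaStar δ q u' ∈ F) ∧
          (∃ v' : List Γ, v' <+: v ∧ deltaStar δ q v' ∈ F) := by
  constructor
  · intro hC
    by_contra hR
    exact hC (Stmt8Aux.hard_dir q0 δ F hF L hL hR)
  · rintro ⟨q, ⟨x, hx⟩, u, v, hu, hv, hne, ⟨u', hu'p, hu'F⟩, ⟨v', hv'p, hv'F⟩⟩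
    exact Stmt8Aux.easy_dir q0 δ F L hL q x hx u v hu hv hne u' hu'p hu'F v' hv'p hv'F
end

section
/- Let S = (L, Σ, <) be a generalized abstract numeration system on an infinite language L over a finite totally ordered alphabet (Σ, <), and let A = (Q, q₀, Σ, δ, F) be a deterministic automaton recognizing L. Then for every w ∈ L, val_S(w) = v_{q₀}(|w|−1) + Σ_{i=0}^{|w|−1} Σ_{a < w[i]} u_{δ(q₀, w[0,i−1]a)}(|w|−i−1), where for w = ε the term v_{q₀}(−1) is 0. -/
/-- Number of words of length `n` accepted from state `q`. -/
noncomputable def ucomp {Q A : Type*} (δ : Q → A → Q) (F : Set Q) (q : Q) (n : ℕ) : ℕ :=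
  {z : List A | z.length = n ∧ deltaStar δ q z ∈ F}.ncard

/-- Genealogical (radix) order: first by length, then lexicographically. -/
def genLt {A : Type*} [LinearOrder A] (x y : List A) : Prop :=
  x.length < y.length ∨ (x.length = y.length ∧ List.Lex (· < ·) x y)

/-- The `S`-numerical value of a word `w` of the language `L`: the number of words
of `L` genealogically smaller than `w`. -/
noncomputable def valS {A : Type*} [LinearOrder A] (L : Set (List A)) (w : List A) : ℕ :=
  {x ∈ L | genLt x w}.ncard

section Aux

variable {Γ : Type*} [Fintype Γ] [LinearOrder Γ] {Q : Type*} (δ : Q → Γ → Q) (F : Set Q)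

lemma lex_cons_cons_iff {c b : Γ} {y t : List Γ} :
    List.Lex (· < ·) (c :: y) (b :: t) ↔ c < b ∨ (c = b ∧ List.Lex (· < ·) y t) := by
  constructor
  · rintro (_ | h | h)
    · exact Or.inl (by assumption)
    · exact Or.inr ⟨rfl, by assumption⟩
  · rintro (h | ⟨rfl, h⟩)
    · exact List.Lex.rel h
    · exact List.Lex.cons h

lemma ncard_biUnion_finset {α β : Type*} (s : Finset α) (f : α → Set β)
    (hfin : ∀ a ∈ s, (f a).Finite)
    (hd : ∀ a ∈ s, ∀ b ∈ s, a ≠ b → Disjoint (f a) (f b)) :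
    (⋃ a ∈ s, f a).ncard = ∑ a ∈ s, (f a).ncard := by
  classical
  induction s using Finset.induction with
  | empty => simp
  | @insert a s ha ih =>
    rw [Finset.set_biUnion_insert, Finset.sum_insert ha,
      Set.ncard_union_eq ?_ (hfin a (Finset.mem_insert_self a s)) ?_,
      ih (fun b hb => hfin b (Finset.mem_insert_of_mem hb))
        (fun b hb c hc => hd b (Finset.mem_insert_of_mem hb) c (Finset.mem_insert_of_mem hc))]
    · exact Set.disjoint_iUnion₂_right.mpr fun b hb =>
        hd a (Finset.mem_insert_self a s) b (Finset.mem_insert_of_mem hb)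
          (fun h => ha (h ▸ hb))
    · exact Set.Finite.biUnion s.finite_toSet
        (fun b hb => hfin b (Finset.mem_insert_of_mem hb))

lemma ucomp_set_finite (q : Q) (n : ℕ) :
    {z : List Γ | z.length = n ∧ deltaStar δ q z ∈ F}.Finite :=
  (List.finite_length_eq Γ n).subset fun _ h => h.1

lemma lenCount (q : Q) (n : ℕ) :
    {x : List Γ | x.length < n ∧ deltaStar δ q x ∈ F}.ncard
      = ∑ m ∈ Finset.range n, ucomp δ F q m := by
  induction n with
  | zero => simp
  | succ n ih =>
    have hset : {x : List Γ | x.length < n + 1 ∧ deltaStar δ q x ∈ F}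
        = {x : List Γ | x.length < n ∧ deltaStar δ q x ∈ F}
          ∪ {x : List Γ | x.length = n ∧ deltaStar δ q x ∈ F} := by
      ext x
      simp only [Set.mem_setOf_eq, Set.mem_union, Nat.lt_succ_iff_lt_or_eq]
      tauto
    rw [hset, Set.ncard_union_eq ?_ ?_ (ucomp_set_finite δ F q n),
      Finset.sum_range_succ, ih]
    · rfl
    · exact Set.disjoint_left.mpr fun x hx hx' => absurd hx'.1 hx.1.ne
    · exact (List.finite_length_lt Γ n).subset fun _ h => h.1

lemma lexCount (q : Q) (w : List Γ) :
    {z : List Γ | z.length = w.length ∧ deltaStar δ q z ∈ F ∧ List.Lex (· < ·) z w}.ncard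
      = ∑ i : Fin w.length,
          ∑ a ∈ Finset.univ.filter (fun a : Γ => a < w.get i),
            ucomp δ F (deltaStar δ q (w.take i.val ++ [a])) (w.length - i.val - 1) := by
  classical
  induction w generalizing q with
  | nil => simp
  | cons b t ih =>
    have hsplit : {z : List Γ | z.length = (b :: t).length ∧ deltaStar δ q z ∈ F
          ∧ List.Lex (· < ·) z (b :: t)}
        = (⋃ c ∈ Finset.univ.filter (fun c : Γ => c < b),
            (c :: ·) '' {y : List Γ | y.length = t.length ∧ deltaStar δ (δ q c) y ∈ F})
          ∪ (b :: ·) '' {y : List Γ | y.length = t.length ∧ deltaStar δ (δ q b) y ∈ F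
              ∧ List.Lex (· < ·) y t} := by
      ext z
      constructor
      · rintro ⟨hlen, hacc, hlex⟩
        match z with
        | [] => simp at hlen
        | c :: y =>
          simp only [List.length_cons, Nat.succ_inj] at hlen
          rcases lex_cons_cons_iff.mp hlex with h | ⟨rfl, h⟩
          · exact Or.inl (Set.mem_biUnion (Finset.mem_coe.mpr (Finset.mem_filter.mpr ⟨Finset.mem_univ c, h⟩)) ⟨y, ⟨hlen, hacc⟩, rfl⟩)
          · exact Or.inr ⟨y, ⟨hlen, hacc, h⟩, rfl⟩
      · rintro (hz | hz)
        · rcases Set.mem_iUnion₂.mp hz with ⟨c, hc, y, ⟨hlen, hacc⟩, rfl⟩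
          simp only [Finset.mem_filter] at hc
          exact ⟨by simp [hlen], hacc, List.Lex.rel hc.2⟩
        · rcases hz with ⟨y, ⟨hlen, hacc, hlex⟩, rfl⟩
          exact ⟨by simp [hlen], hacc, List.Lex.cons hlex⟩
    rw [hsplit, Set.ncard_union_eq ?disj ?fin1 ?fin2]
    case disj =>
      refine Set.disjoint_right.mpr fun z hz hz' => ?_
      rcases hz with ⟨y, _, rfl⟩
      rcases Set.mem_iUnion₂.mp hz' with ⟨c, hc, y', _, heq⟩
      simp only [Finset.mem_filter] at hc
      have : c = b := (List.cons.injEq _ _ _ _ ▸ heq).1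
      exact absurd (this ▸ hc.2) (lt_irrefl b)
    case fin1 =>
      exact Set.Finite.biUnion (Finset.finite_toSet _) fun c _ =>
        ((ucomp_set_finite δ F (δ q c) t.length).image _)
    case fin2 =>
      exact ((List.finite_length_eq Γ t.length).subset fun _ h => h.1).image _
    rw [ncard_biUnion_finset _ _
        (fun c _ => (ucomp_set_finite δ F (δ q c) t.length).image _)
        (fun c _ c' _ hcc => Set.disjoint_left.mpr (by
          rintro z ⟨y, _, rfl⟩ ⟨y', _, heq⟩
          exact hcc (List.cons.injEq _ _ _ _ ▸ heq).1.symm))]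
    have himg : ∀ c : Γ,
        ((c :: ·) '' {y : List Γ | y.length = t.length ∧ deltaStar δ (δ q c) y ∈ F}).ncard
          = ucomp δ F (δ q c) t.length := fun c =>
      Set.ncard_image_of_injective _ (List.cons_injective)
    have himg2 : ((b :: ·) '' {y : List Γ | y.length = t.length ∧ deltaStar δ (δ q b) y ∈ F
          ∧ List.Lex (· < ·) y t}).ncard
        = {y : List Γ | y.length = t.length ∧ deltaStar δ (δ q b) y ∈ F
          ∧ List.Lex (· < ·) y t}.ncard :=
      Set.ncard_image_of_injective _ (List.cons_injective)
    rw [himg2, ih (δ q b)]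
    simp only [himg]
    simp only [List.length_cons]
    rw [Fin.sum_univ_succ]
    congr 1
    apply Finset.sum_congr rfl
    intro j _
    apply Finset.sum_congr (by simp)
    intro a _
    have h1 : List.take (↑j.succ) (b :: t) ++ [a] = b :: (t.take j.val ++ [a]) := by
      simp [List.take_succ_cons]
    have h2 : t.length + 1 - ↑j.succ - 1 = t.length - j.val - 1 := by
      simp [Fin.val_succ]
    rw [h1, h2]
    rfl

end Aux

theorem stmt_11 {Γ : Type*} [Fintype Γ] [LinearOrder Γ]
    (L : Set (List Γ)) (hLinf : L.Infinite)
    {Q : Type*} (q0 : Q) (δ : Q → Γ → Q) (F : Set Q)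
    (hL : L = {w | deltaStar δ q0 w ∈ F})
    (w : List Γ) (hw : w ∈ L) :
    valS L w =
      (∑ m ∈ Finset.range w.length, ucomp δ F q0 m) +
        ∑ i : Fin w.length,
          ∑ a ∈ Finset.univ.filter (fun a : Γ => a < w.get i),
            ucomp δ F (deltaStar δ q0 (w.take i.val ++ [a])) (w.length - i.val - 1) := by
  subst hL
  have key : {x ∈ {v : List Γ | deltaStar δ q0 v ∈ F} | genLt x w}
      = {x : List Γ | x.length < w.length ∧ deltaStar δ q0 x ∈ F}
        ∪ {z : List Γ | z.length = w.length ∧ deltaStar δ q0 z ∈ F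
            ∧ List.Lex (· < ·) z w} := by
    ext x
    simp only [Set.mem_setOf_eq, Set.mem_union, genLt]
    tauto
  show ({x ∈ {v : List Γ | deltaStar δ q0 v ∈ F} | genLt x w}).ncard = _
  rw [key, Set.ncard_union_eq ?disj ?fin1 ?fin2, lenCount, lexCount]
  case disj => exact Set.disjoint_left.mpr fun x hx hx' => absurd hx'.1 hx.1.ne
  case fin1 => exact (List.finite_length_lt Γ w.length).subset fun _ h => h.1
  case fin2 => exact (List.finite_length_eq Γ w.length).subset fun _ h => h.1
end

section
/- Under the Setup with Hypothesis (H2), for every w ∈ adh(L) and every ℓ ≥ 0, the prefix w[0,ℓ−1] belongs to centre(L) ∩ Σ^ℓ, and the sequence (α_{w[0,ℓ−1]})_{ℓ≥1} is nondecreasing, bounded above by 1, and hence converges as ℓ → ∞. -/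
open Filter Topology

/-- `vcomp δ F q n` : number of words of length at most `n` accepted from state `q`. -/
noncomputable def vcomp {Q A : Type*} (δ : Q → A → Q) (F : Set Q) (q : Q) (n : ℕ) : ℕ :=
  ∑ m ∈ Finset.range (n + 1), ucomp δ F q m

open scoped Classical in
/-- For a word `y`, `alphaFin L r y = s₀ + Σ_{x ∈ centre(L), |x| = |y|, x <_lex y} r x`
where `s₀ = 1 - r ε`.  (Words of length `|y|` are enumerated as `List.ofFn f`
for `f : Fin |y| → A`.) -/
noncomputable def alphaFin {A : Type*} [Fintype A] [LinearOrder A]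
    (L : Set (List A)) (r : List A → ℝ) (y : List A) : ℝ :=
  (1 - r []) +
    ∑ f : Fin y.length → A,
      if List.ofFn f ∈ centre L ∧ List.Lex (· < ·) (List.ofFn f) y then r (List.ofFn f)
      else 0

section Aux

open scoped Classical

lemma prefixOf_length {A : Type*} (w : ℕ → A) (ℓ : ℕ) : (prefixOf w ℓ).length = ℓ := by
  simp [prefixOf]

lemma ofFn_snoc' {A : Type*} {n : ℕ} (g : Fin n → A) (a : A) :
    List.ofFn (Fin.snoc g a) = List.ofFn g ++ [a] := by
  rw [List.ofFn_succ']
  simp [List.concat_eq_append]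

lemma prefixOf_succ {A : Type*} (w : ℕ → A) (ℓ : ℕ) :
    prefixOf w (ℓ + 1) = prefixOf w ℓ ++ [w ℓ] := by
  have h : (fun i : Fin (ℓ + 1) => w i) = Fin.snoc (fun i : Fin ℓ => w i) (w ℓ) := by
    funext i
    refine Fin.lastCases ?_ ?_ i <;> simp
  rw [prefixOf, h, ofFn_snoc']; rfl

lemma prefixOf_prefix {A : Type*} (w : ℕ → A) {j k : ℕ} (h : j ≤ k) :
    prefixOf w j <+: prefixOf w k := by
  induction k, h using Nat.le_induction with
  | base => exact List.prefix_refl _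
  | succ k hk ih => exact ih.trans (by rw [prefixOf_succ]; exact List.prefix_append _ _)

lemma prefixOf_getD {A : Type*} (d : A) (l : List A) {n : ℕ} (h : n ≤ l.length) :
    prefixOf (fun i => l.getD i d) n = l.take n := by
  apply List.ext_getElem
  · simp [prefixOf, h]
  · intro i h1 h2
    simp only [prefixOf] at h1 ⊢
    rw [List.getElem_ofFn]
    simp only [List.length_ofFn] at h1
    rw [List.getElem_take]
    exact List.getD_eq_getElem l d (by omega)

lemma lex_cons_cons {A : Type*} [LinearOrder A] {c d : A} {l₁ l₂ : List A} :
    List.Lex (· < ·) (c :: l₁) (d :: l₂) ↔ c < d ∨ (c = d ∧ List.Lex (· < ·) l₁ l₂) := by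
  constructor
  · intro h
    cases h with
    | cons h => exact Or.inr ⟨rfl, h⟩
    | rel h => exact Or.inl h
  · rintro (h | ⟨rfl, h⟩)
    · exact List.Lex.rel h
    · exact List.Lex.cons h

lemma lex_append_singleton {A : Type*} [LinearOrder A] {x y : List A} (h : x.length = y.length)
    (a b : A) :
    List.Lex (· < ·) (x ++ [a]) (y ++ [b]) ↔
      List.Lex (· < ·) x y ∨ (x = y ∧ a < b) := by
  induction x generalizing y with
  | nil =>
    cases y with
    | nil => simpa using List.Lex.singleton_iff a b
    | cons d y' => simp at h
  | cons c x' ih =>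
    cases y with
    | nil => simp at h
    | cons d y' =>
      simp only [List.cons_append]
      rw [lex_cons_cons, lex_cons_cons, ih (by simpa using h)]
      simp only [List.cons.injEq]
      tauto

lemma ucomp_eq {Q A : Type*} [Fintype A] (δ : Q → A → Q) (F : Set Q) (q : Q) (n : ℕ) :
    ucomp δ F q n = ∑ f : Fin n → A, if deltaStar δ q (List.ofFn f) ∈ F then 1 else 0 := by
  have hset : {z : List A | z.length = n ∧ deltaStar δ q z ∈ F}
      = List.ofFn '' {f : Fin n → A | deltaStar δ q (List.ofFn f) ∈ F} := by
    ext z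
    constructor
    · rintro ⟨hlen, hF⟩
      subst hlen
      refine ⟨z.get, ?_, List.ofFn_get z⟩
      show deltaStar δ q (List.ofFn z.get) ∈ F
      rw [List.ofFn_get]; exact hF
    · rintro ⟨f, hf, rfl⟩
      exact ⟨by simp, hf⟩
  rw [ucomp, hset, Set.ncard_image_of_injective _ List.ofFn_injective,
    Set.ncard_eq_toFinset_card', Set.toFinset_setOf, Finset.card_filter]

lemma ucomp_succ {Q A : Type*} [Fintype A] (δ : Q → A → Q) (F : Set Q) (q : Q) (m : ℕ) :
    ucomp δ F q (m + 1) = ∑ a : A, ucomp δ F (δ q a) m := by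
  rw [ucomp_eq]
  rw [← (Fin.consEquiv (fun _ : Fin (m+1) => A)).sum_comp
    (fun f => if deltaStar δ q (List.ofFn f) ∈ F then 1 else 0)]
  rw [Fintype.sum_prod_type]
  refine Finset.sum_congr rfl fun a _ => ?_
  rw [ucomp_eq]
  refine Finset.sum_congr rfl fun g _ => ?_
  have : List.ofFn ((Fin.consEquiv (fun _ : Fin (m+1) => A)) (a, g)) = a :: List.ofFn g := by
    rw [List.ofFn_succ]; simp [Fin.consEquiv]
  rw [this]
  rfl

lemma centre_drop {A : Type*} {L : Set (List A)} {x : List A} {a : A}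
    (h : x ++ [a] ∈ centre L) : x ∈ centre L := by
  obtain ⟨w, hw, hx⟩ := h
  have hlen : (x ++ [a]).length = x.length + 1 := by simp
  rw [hlen, prefixOf_succ] at hx
  exact ⟨w, hw, List.append_inj_left hx (by rw [prefixOf_length])⟩

lemma ext_centre {A : Type*} [Fintype A] [Nonempty A] {L : Set (List A)} (hpc : pref L = L)
    (x : List A) (hx : ∀ m : ℕ, ∃ z : List A, z.length = m ∧ x ++ z ∈ L) : x ∈ centre L := by
  letI : TopologicalSpace A := ⊥
  haveI : DiscreteTopology A := ⟨rfl⟩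
  haveI : Inhabited A := Classical.inhabited_of_nonempty ‹_›
  set t : ℕ → Set (ℕ → A) :=
    fun m => {w | prefixOf w x.length = x ∧ prefixOf w (x.length + m) ∈ L} with ht
  have hclosed : ∀ m, IsClosed (t m) := by
    intro m
    have hc : ∀ (N : ℕ) (S : Set (List A)), IsClosed {w : ℕ → A | prefixOf w N ∈ S} := by
      intro N S
      have : {w : ℕ → A | prefixOf w N ∈ S}
          = (fun (w : ℕ → A) (i : Fin N) => w i) ⁻¹' {f | List.ofFn f ∈ S} := rfl
      rw [this]
      exact (isClosed_discrete _).preimage (continuous_pi fun i => continuous_apply _)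
    have : t m = {w : ℕ → A | prefixOf w x.length ∈ ({x} : Set (List A))} ∩
        {w : ℕ → A | prefixOf w (x.length + m) ∈ L} := by
      ext w; simp [ht]
    rw [this]
    exact (hc _ _).inter (hc _ _)
  have hmono : ∀ m, t (m + 1) ⊆ t m := by
    rintro m w ⟨h1, h2⟩
    refine ⟨h1, ?_⟩
    rw [← hpc]
    exact ⟨prefixOf w (x.length + (m + 1)), h2, prefixOf_prefix w (by omega)⟩
  have hne : ∀ m, (t m).Nonempty := by
    intro m
    obtain ⟨z, hzl, hzL⟩ := hx m
    refine ⟨fun i => (x ++ z).getD i default, ?_, ?_⟩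
    · rw [prefixOf_getD _ _ (by simp), List.take_left]
    · rw [prefixOf_getD _ _ (by simp [hzl]),
        List.take_of_length_le (by simp [hzl])]
      exact hzL
  obtain ⟨w, hwmem⟩ := IsCompact.nonempty_iInter_of_sequence_nonempty_isCompact_isClosed
    t hmono hne ((hclosed 0).isCompact) hclosed
  simp only [Set.mem_iInter] at hwmem
  have hadh : w ∈ adh L := by
    intro ℓ
    exact ⟨prefixOf w (x.length + ℓ), (hwmem ℓ).2, prefixOf_prefix w (by omega)⟩
  exact ⟨w, hadh, ((hwmem 0).1).symm⟩

variable {Γ : Type*} [Fintype Γ] [LinearOrder Γ] {L : Set (List Γ)}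
  {Q : Type*} {q0 : Q} {δ : Q → Γ → Q} {F : Set Q} {r : List Γ → ℝ}

lemma r_nonneg
    (hH2 : ∀ x : List Γ,
      Tendsto (fun n : ℕ =>
          (ucomp δ F (deltaStar δ q0 x) (n - x.length) : ℝ) / (vcomp δ F q0 n : ℝ))
        atTop (𝓝 (r x))) (x : List Γ) : 0 ≤ r x :=
  ge_of_tendsto' (hH2 x) fun n => by positivity

lemma r_split
    (hH2 : ∀ x : List Γ,
      Tendsto (fun n : ℕ =>
          (ucomp δ F (deltaStar δ q0 x) (n - x.length) : ℝ) / (vcomp δ F q0 n : ℝ))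
        atTop (𝓝 (r x))) (x : List Γ) : r x = ∑ a : Γ, r (x ++ [a]) := by
  have key : ∀ n : ℕ, x.length + 1 ≤ n →
      (ucomp δ F (deltaStar δ q0 x) (n - x.length) : ℝ) / (vcomp δ F q0 n : ℝ)
      = ∑ a : Γ, (ucomp δ F (deltaStar δ q0 (x ++ [a])) (n - (x ++ [a]).length) : ℝ)
          / (vcomp δ F q0 n : ℝ) := by
    intro n hn
    have h1 : n - x.length = (n - x.length - 1) + 1 := by omega
    rw [h1, ucomp_succ]
    push_cast
    rw [Finset.sum_div]
    refine Finset.sum_congr rfl fun a _ => ?_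
    have e1 : deltaStar δ q0 (x ++ [a]) = δ (deltaStar δ q0 x) a := by
      simp [deltaStar, List.foldl_append]
    have e2 : n - (x ++ [a]).length = n - x.length - 1 := by
      simp only [List.length_append, List.length_singleton]
      omega
    rw [e1, e2]
  have h2 : Tendsto (fun n : ℕ => ∑ a : Γ,
      (ucomp δ F (deltaStar δ q0 (x ++ [a])) (n - (x ++ [a]).length) : ℝ)
        / (vcomp δ F q0 n : ℝ)) atTop (𝓝 (∑ a : Γ, r (x ++ [a]))) :=
    tendsto_finset_sum _ fun a _ => hH2 (x ++ [a])
  exact tendsto_nhds_unique (hH2 x)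
    (h2.congr' (eventually_atTop.2 ⟨x.length + 1, fun n hn => (key n hn).symm⟩))

lemma r_zero [Nonempty Γ] (hpc : pref L = L) (hL : L = {x | deltaStar δ q0 x ∈ F})
    (hH2 : ∀ x : List Γ,
      Tendsto (fun n : ℕ =>
          (ucomp δ F (deltaStar δ q0 x) (n - x.length) : ℝ) / (vcomp δ F q0 n : ℝ))
        atTop (𝓝 (r x)))
    (x : List Γ) (hx : x ∉ centre L) : r x = 0 := by
  obtain ⟨m, hm⟩ : ∃ m : ℕ, ∀ z : List Γ, z.length = m → x ++ z ∉ L := by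
    by_contra hcon
    push_neg at hcon
    exact hx (ext_centre hpc x hcon)
  have hzero : ∀ n : ℕ, x.length + m ≤ n →
      ucomp δ F (deltaStar δ q0 x) (n - x.length) = 0 := by
    intro n hn
    rw [ucomp]
    convert Set.ncard_empty (List Γ)
    ext z
    simp only [Set.mem_setOf_eq, Set.mem_empty_iff_false, iff_false, not_and]
    intro hzl hzF
    have hmem : x ++ z ∈ L := by
      rw [hL]
      show deltaStar δ q0 (x ++ z) ∈ F
      simpa [deltaStar, List.foldl_append] using hzF
    have hmz : m ≤ z.length := by omega
    have htake : x ++ z.take m ∈ L := by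
      rw [← hpc]
      exact ⟨x ++ z, hmem, ⟨z.drop m, by rw [List.append_assoc, List.take_append_drop]⟩⟩
    exact hm (z.take m) (by simp [hzl]; omega) htake
  have h0 : Tendsto (fun n : ℕ =>
      (ucomp δ F (deltaStar δ q0 x) (n - x.length) : ℝ) / (vcomp δ F q0 n : ℝ))
      atTop (𝓝 0) :=
    tendsto_const_nhds.congr' (eventually_atTop.2
      ⟨x.length + m, fun n hn => by simp [hzero n hn]⟩)
  exact tendsto_nhds_unique (hH2 x) h0

lemma sum_snoc {n : ℕ} (G : List Γ → ℝ) :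
    ∑ f : Fin (n + 1) → Γ, G (List.ofFn f) = ∑ g : Fin n → Γ, ∑ a : Γ, G (List.ofFn g ++ [a]) := by
  rw [← (Fin.snocEquiv (fun _ : Fin (n + 1) => Γ)).sum_comp (fun f => G (List.ofFn f)),
    Fintype.sum_prod_type, Finset.sum_comm]
  refine Finset.sum_congr rfl fun g _ => Finset.sum_congr rfl fun a _ => ?_
  have : List.ofFn ((Fin.snocEquiv (fun _ : Fin (n + 1) => Γ)) (a, g)) = List.ofFn g ++ [a] := by
    rw [← ofFn_snoc']; rfl
  rw [this]

lemma sum_ite_centre (hsplit : ∀ x : List Γ, r x = ∑ a : Γ, r (x ++ [a]))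
    (hzero : ∀ x ∉ centre L, r x = 0) (x : List Γ) (P : Prop) [Decidable P]
    [Decidable (x ∈ centre L ∧ P)] [∀ a : Γ, Decidable (x ++ [a] ∈ centre L ∧ P)] :
    (∑ a : Γ, if x ++ [a] ∈ centre L ∧ P then r (x ++ [a]) else 0)
      = if x ∈ centre L ∧ P then r x else 0 := by
  by_cases hP : P
  · simp only [hP, and_true]
    by_cases hx : x ∈ centre L
    · rw [if_pos hx, hsplit x]
      refine Finset.sum_congr rfl fun a _ => ?_
      by_cases h : x ++ [a] ∈ centre L
      · rw [if_pos h]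
      · rw [if_neg h, hzero _ h]
    · rw [if_neg hx]
      refine Finset.sum_eq_zero fun a _ => ?_
      exact if_neg (fun h => hx (centre_drop h))
  · simp [hP]

lemma sum_centre_eq (hsplit : ∀ x : List Γ, r x = ∑ a : Γ, r (x ++ [a]))
    (hzero : ∀ x ∉ centre L, r x = 0) (hnil : ([] : List Γ) ∈ centre L) (n : ℕ) :
    (∑ f : Fin n → Γ, if List.ofFn f ∈ centre L then r (List.ofFn f) else 0) = r [] := by
  induction n with
  | zero => simp [List.ofFn_zero, hnil]
  | succ n ih =>
    rw [sum_snoc (fun y => if y ∈ centre L then r y else 0), ← ih]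
    refine Finset.sum_congr rfl fun g _ => ?_
    simpa using sum_ite_centre hsplit hzero (List.ofFn g) True

lemma alphaFin_eq (L : Set (List Γ)) (r : List Γ → ℝ) (y : List Γ) (ℓ : ℕ)
    (hy : y.length = ℓ) :
    alphaFin L r y = (1 - r []) + ∑ f : Fin ℓ → Γ,
      if List.ofFn f ∈ centre L ∧ List.Lex (· < ·) (List.ofFn f) y then r (List.ofFn f)
      else 0 := by
  subst hy; rfl

end Aux


theorem stmt_12 {Γ : Type*} [Fintype Γ] [LinearOrder Γ]
    (L : Set (List Γ)) (hLinf : L.Infinite) (hpc : pref L = L)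
    {Q : Type*} (q0 : Q) (δ : Q → Γ → Q) (F : Set Q)
    (hacc : ∀ q : Q, ∃ x : List Γ, deltaStar δ q0 x = q)
    (hL : L = {x | deltaStar δ q0 x ∈ F})
    (r : List Γ → ℝ)
    (hH2 : ∀ x : List Γ,
      Tendsto (fun n : ℕ =>
          (ucomp δ F (deltaStar δ q0 x) (n - x.length) : ℝ) / (vcomp δ F q0 n : ℝ))
        atTop (𝓝 (r x)))
    (w : ℕ → Γ) (hw : w ∈ adh L) :
    (∀ ℓ : ℕ, prefixOf w ℓ ∈ centre L ∧ (prefixOf w ℓ).length = ℓ) ∧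
    Monotone (fun ℓ : ℕ => alphaFin L r (prefixOf w ℓ)) ∧
    (∀ ℓ : ℕ, alphaFin L r (prefixOf w ℓ) ≤ 1) ∧
    ∃ x : ℝ, Tendsto (fun ℓ : ℕ => alphaFin L r (prefixOf w ℓ)) atTop (𝓝 x) := by
  classical
  haveI : Nonempty Γ := by
    obtain ⟨z, hz⟩ := (hLinf.diff (Set.finite_singleton [])).nonempty
    cases z with
    | nil => simp at hz
    | cons a _ => exact ⟨a⟩
  have hnil : ([] : List Γ) ∈ centre L := ⟨w, hw, by simp [prefixOf]⟩
  have hr0 : ∀ x : List Γ, 0 ≤ r x := r_nonneg hH2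
  have hzero : ∀ x ∉ centre L, r x = 0 := fun x hx => r_zero hpc hL hH2 x hx
  have hsplit : ∀ x : List Γ, r x = ∑ a : Γ, r (x ++ [a]) := r_split hH2
  have hpart1 : ∀ ℓ : ℕ, prefixOf w ℓ ∈ centre L ∧ (prefixOf w ℓ).length = ℓ := fun ℓ =>
    ⟨⟨w, hw, by rw [prefixOf_length]⟩, prefixOf_length w ℓ⟩
  set Sf : ℕ → ℝ := fun ℓ => ∑ f : Fin ℓ → Γ,
    if List.ofFn f ∈ centre L ∧ List.Lex (· < ·) (List.ofFn f) (prefixOf w ℓ)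
    then r (List.ofFn f) else 0 with hSf
  have halpha : ∀ ℓ : ℕ, alphaFin L r (prefixOf w ℓ) = (1 - r []) + Sf ℓ := fun ℓ =>
    alphaFin_eq L r (prefixOf w ℓ) ℓ (prefixOf_length w ℓ)
  have hmonoS : ∀ ℓ : ℕ, Sf ℓ ≤ Sf (ℓ + 1) := by
    intro ℓ
    rw [hSf]
    simp only
    rw [prefixOf_succ w ℓ,
      sum_snoc (fun y => if y ∈ centre L ∧ List.Lex (· < ·) y (prefixOf w ℓ ++ [w ℓ])
        then r y else 0)]
    refine Finset.sum_le_sum fun g _ => ?_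
    rw [← sum_ite_centre hsplit hzero (List.ofFn g)
      (List.Lex (· < ·) (List.ofFn g) (prefixOf w ℓ))]
    refine Finset.sum_le_sum fun a _ => ?_
    have hlen : (List.ofFn g).length = (prefixOf w ℓ).length := by
      simp [prefixOf_length]
    split_ifs with h1 h2 h2
    · exact le_refl _
    · exact absurd ⟨h1.1, (lex_append_singleton hlen a (w ℓ)).mpr (Or.inl h1.2)⟩ h2
    · exact hr0 _
    · exact le_refl _
  have hboundS : ∀ ℓ : ℕ, Sf ℓ ≤ r [] := by
    intro ℓ
    rw [← sum_centre_eq hsplit hzero hnil ℓ, hSf]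
    refine Finset.sum_le_sum fun f _ => ?_
    split_ifs with h1 h2 h2
    · exact le_refl _
    · exact absurd h1.1 h2
    · exact hr0 _
    · exact le_refl _
  have hmono : Monotone (fun ℓ : ℕ => alphaFin L r (prefixOf w ℓ)) := by
    apply monotone_nat_of_le_succ
    intro ℓ
    rw [halpha, halpha]
    linarith [hmonoS ℓ]
  have hbound : ∀ ℓ : ℕ, alphaFin L r (prefixOf w ℓ) ≤ 1 := by
    intro ℓ
    rw [halpha]
    linarith [hboundS ℓ]
  refine ⟨hpart1, hmono, hbound, ?_⟩
  refine ⟨_, tendsto_atTop_ciSup hmono ⟨1, ?_⟩⟩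
  rintro v ⟨ℓ, rfl⟩
  exact hbound ℓ
end
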